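/- arXiv:1605.06643 — 5 statements merged into one kernel-verified Lean document; each statement's English description precedes it below -/
import Mathlib

section
/- Let α ∈ (0,1) be a fixed constant. Consider a sequence of graphs G = G^(n), where G^(n) is a d(n)-regular simple graph on n vertices with d(n) → ∞ and λ(G^(n))/d(n) → 0 as n → ∞, and let G_p be the random subgraph of G^(n) with edge probability p = α/d(n). Then there exists a constant C = C(α) > 0 such that with high probability (probability tending to 1 as n → ∞) every connected component of G_p has at most C·log n vertices. -/
open MeasureTheory Filter

/-- Bernoulli measure on `Bool` with success probability `p`. -/
noncomputable def bernoulliMeasure (p : ℝ) : MeasureTheory.Measure Bool :=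
  ENNReal.ofReal p • MeasureTheory.Measure.dirac true +
    ENNReal.ofReal (1 - p) • MeasureTheory.Measure.dirac false

/-- Product measure: each potential edge (element of `Sym2 (Fin n)`) is retained
independently with probability `p`. -/
noncomputable def percolationMeasure (n : ℕ) (p : ℝ) :
    MeasureTheory.Measure (Sym2 (Fin n) → Bool) :=
  MeasureTheory.Measure.pi fun _ => bernoulliMeasure p

/-- The random subgraph `G_p`: the spanning subgraph of `G` whose edges are the
edges of `G` retained by `ω`. -/
def percolatedGraph {n : ℕ} (G : SimpleGraph (Fin n)) (ω : Sym2 (Fin n) → Bool) :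
    SimpleGraph (Fin n) where
  Adj u v := G.Adj u v ∧ ω s(u, v) = true
  symm := ⟨fun u v h => ⟨h.1.symm, by rw [Sym2.eq_swap]; exact h.2⟩⟩
  loopless := ⟨fun v h => G.loopless.irrefl v h.1⟩

/-- `G` is `d`-regular: every vertex has exactly `d` neighbours. -/
def regularOfDegree {n : ℕ} (G : SimpleGraph (Fin n)) (d : ℕ) : Prop :=
  ∀ v, Nat.card (G.neighborSet v) = d

/-- `λ(G)`: the maximum absolute value of the eigenvalues of the adjacency matrix of
the `d`-regular graph `G` other than the largest one `λ₁ = d` (one copy of the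
eigenvalue `d` is removed from the multiset of roots of the characteristic
polynomial). -/
noncomputable def secondEigenvalue {n : ℕ} (G : SimpleGraph (Fin n)) (d : ℕ) : ℝ :=
  letI : DecidableEq ℝ := Classical.decEq ℝ
  letI : DecidableRel G.Adj := fun _ _ => Classical.dec _
  NNReal.toReal ((((SimpleGraph.adjMatrix ℝ G).charpoly.roots.erase ((d : ℝ))).map
    (fun x => Real.toNNReal |x|)).sup)

/-- Number of vertices of the connected component `c`. -/
noncomputable def componentOrder {n : ℕ} (H : SimpleGraph (Fin n))
    (c : H.ConnectedComponent) : ℕ := Nat.card c.supp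

/-- Number of edges of the connected component `c`. -/
noncomputable def componentEdges {n : ℕ} (H : SimpleGraph (Fin n))
    (c : H.ConnectedComponent) : ℕ := Nat.card (H.induce c.supp).edgeSet

/-- The connected component `c` is a tree. -/
def componentIsTree {n : ℕ} (H : SimpleGraph (Fin n)) (c : H.ConnectedComponent) : Prop :=
  (H.induce c.supp).IsTree

/-- `C_k`: the number of vertices lying in connected components with exactly `k` vertices. -/
noncomputable def verticesInComponentsOfSize {n : ℕ} (H : SimpleGraph (Fin n)) (k : ℕ) : ℕ :=
  Nat.card {v : Fin n | componentOrder H (H.connectedComponentMk v) = k}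

/-- `T_k`: the number of vertices lying in connected components that are trees with
exactly `k` vertices. -/
noncomputable def verticesInTreeComponentsOfSize {n : ℕ} (H : SimpleGraph (Fin n)) (k : ℕ) : ℕ :=
  Nat.card {v : Fin n | componentOrder H (H.connectedComponentMk v) = k ∧
    componentIsTree H (H.connectedComponentMk v)}

/-- `t_k`: the number of subtrees of `G` with exactly `k` vertices. -/
noncomputable def subtreeCount {n : ℕ} (G : SimpleGraph (Fin n)) (k : ℕ) : ℕ :=
  Nat.card {H : G.Subgraph // H.coe.IsTree ∧ Nat.card H.verts = k}

/-- `N_k`: the number of connected components that are trees with exactly `k` vertices. -/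
noncomputable def treeComponentCount {n : ℕ} (H : SimpleGraph (Fin n)) (k : ℕ) : ℕ :=
  Nat.card {c : H.ConnectedComponent // componentOrder H c = k ∧ componentIsTree H c}


open scoped Classical



section PiBool

variable {ι : Type*} [Fintype ι] (ν : Measure Bool) [IsProbabilityMeasure ν]

set_option linter.unusedSectionVars false

/-- every subset of a finite product of `Bool`s is measurable -/
lemma measurableSet_all (s : Set (ι → Bool)) : MeasurableSet s := by
  haveI : MeasurableSingletonClass (ι → Bool) := by
    constructor
    intro ω
    have : {ω} = ⋂ i : ι, (fun ω' : ι → Bool => ω' i) ⁻¹' {ω i} := by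
      ext ω'; simp [funext_iff]
    rw [this]
    exact MeasurableSet.iInter fun i => (measurable_pi_apply i) (measurableSet_singleton _)
  exact (Set.toFinite s).measurableSet

lemma pi_singleton (ω : ι → Bool) :
    (Measure.pi fun _ : ι => ν) {ω} = ∏ i : ι, ν {ω i} := by
  have : ({ω} : Set (ι → Bool)) = Set.univ.pi fun i => {ω i} := by
    ext ω'; simp [funext_iff]
  rw [this, Measure.pi_pi]

lemma pi_weight (s : Set (ι → Bool)) (t : Finset (ι → Bool)) (ht : ∀ ω, ω ∈ t ↔ ω ∈ s) :
    (Measure.pi fun _ : ι => ν) s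
      = ∑ ω ∈ t, ∏ i : ι, ν {ω i} := by
  have hs : s = ⋃ ω ∈ t, {ω} := by
    ext ω; simp [ht]
  nth_rewrite 1 [hs]
  rw [measure_biUnion_finset]
  · exact Finset.sum_congr rfl fun ω _ => pi_singleton ν ω
  · intro x _ y _ hxy
    simp [Function.onFun, Set.disjoint_singleton, hxy]
  · exact fun _ _ => measurableSet_all _

lemma bool_meas_add (b : Bool) : ν {b} + ν {!b} = 1 := by
  have h : ({b} : Set Bool) ∪ {!b} = Set.univ := by
    ext c; cases c <;> cases b <;> simp
  have hd : Disjoint ({b} : Set Bool) {!b} := by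
    cases b <;> simp
  rw [← measure_union hd (measurableSet_singleton _), h, measure_univ]

lemma pi_single_coord (i : ι) (b : Bool) (F : Set (ι → Bool))
    (hF : ∀ ω (c : Bool), ω ∈ F → Function.update ω i c ∈ F) :
    (Measure.pi fun _ : ι => ν) ({ω | ω i = b} ∩ F)
      = ν {b} * (Measure.pi fun _ : ι => ν) F := by
  rw [pi_weight ν _ (Finset.univ.filter (fun ω => ω ∈ F ∧ ω i = b))
      (by intro ω; simp [and_comm]),
    pi_weight ν F (Finset.univ.filter (· ∈ F)) (by intro ω; simp)]
  set μp := fun ω : ι → Bool => ∏ j : ι, ν {ω j} with hμp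
  have split : ∀ ω : ι → Bool, μp ω = ν {ω i} * ∏ j ∈ Finset.univ.erase i, ν {ω j} := by
    intro ω
    rw [hμp]
    exact (Finset.mul_prod_erase Finset.univ _ (Finset.mem_univ i)).symm
  set T := fun c : Bool => ∑ ω ∈ Finset.univ.filter (fun ω => ω ∈ F ∧ ω i = c),
      ∏ j ∈ Finset.univ.erase i, ν {ω j} with hT
  have hTeq : T b = T (!b) := by
    rw [hT]
    refine Finset.sum_nbij' (fun ω => Function.update ω i (!b)) (fun ω => Function.update ω i b)
      ?_ ?_ ?_ ?_ ?_
    · intro ω hω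
      simp only [Finset.mem_filter, Finset.mem_univ, true_and] at hω ⊢
      exact ⟨hF ω (!b) hω.1, by simp⟩
    · intro ω hω
      simp only [Finset.mem_filter, Finset.mem_univ, true_and] at hω ⊢
      exact ⟨hF ω b hω.1, by simp⟩
    · intro ω hω
      simp only [Finset.mem_filter, Finset.mem_univ, true_and] at hω
      funext j
      rcases eq_or_ne j i with rfl | hj
      · simp [hω.2]
      · simp [Function.update_of_ne hj]
    · intro ω hω
      simp only [Finset.mem_filter, Finset.mem_univ, true_and] at hω
      funext j
      rcases eq_or_ne j i with rfl | hj
      · simp [hω.2]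
      · simp [Function.update_of_ne hj]
    · intro ω hω
      refine Finset.prod_congr rfl fun j hj => ?_
      simp [Function.update_of_ne (Finset.ne_of_mem_erase hj)]
  have hsum : ∀ c : Bool, ∑ ω ∈ Finset.univ.filter (fun ω => ω ∈ F ∧ ω i = c), μp ω
      = ν {c} * T c := by
    intro c
    rw [hT, Finset.mul_sum]
    refine Finset.sum_congr rfl fun ω hω => ?_
    simp only [Finset.mem_filter, Finset.mem_univ, true_and] at hω
    rw [split ω, hω.2]
  have hFsplit : Finset.univ.filter (· ∈ F)
      = Finset.univ.filter (fun ω => ω ∈ F ∧ ω i = b)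
        ∪ Finset.univ.filter (fun ω => ω ∈ F ∧ ω i = !b) := by
    ext ω
    simp only [Finset.mem_filter, Finset.mem_union, Finset.mem_univ, true_and]
    cases hb : ω i <;> cases b <;> simp_all
  have hdisj : Disjoint (Finset.univ.filter (fun ω => ω ∈ F ∧ ω i = b))
      (Finset.univ.filter (fun ω => ω ∈ F ∧ ω i = !b)) := by
    rw [Finset.disjoint_left]
    intro ω h1 h2
    simp only [Finset.mem_filter, Finset.mem_univ, true_and] at h1 h2
    rw [h1.2] at h2
    exact absurd h2.2 (by cases b <;> simp)
  rw [hsum b, hFsplit, Finset.sum_union hdisj, hsum b, hsum (!b), ← hTeq,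
    ← add_mul, bool_meas_add, one_mul]

lemma pi_pattern_indep (A : Finset ι) (f : ι → Bool) (E : Set (ι → Bool))
    (hE : ∀ ω ω', (∀ i, i ∉ A → ω i = ω' i) → ω ∈ E → ω' ∈ E) :
    ∀ B ⊆ A, (Measure.pi fun _ : ι => ν) ({ω | ∀ i ∈ B, ω i = f i} ∩ E)
      = (∏ i ∈ B, ν {f i}) * (Measure.pi fun _ : ι => ν) E := by
  intro B
  induction B using Finset.induction with
  | empty => intro _; simp
  | @insert i B hiB ih =>
    intro hBA
    have hiA : i ∈ A := hBA (Finset.mem_insert_self i B)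
    have hBA' : B ⊆ A := fun x hx => hBA (Finset.mem_insert_of_mem hx)
    have hset : {ω : ι → Bool | ∀ j ∈ insert i B, ω j = f j} ∩ E
        = {ω | ω i = f i} ∩ ({ω | ∀ j ∈ B, ω j = f j} ∩ E) := by
      ext ω
      simp only [Set.mem_inter_iff, Set.mem_setOf_eq, Finset.mem_insert]
      constructor
      · rintro ⟨h1, h2⟩
        exact ⟨h1 i (Or.inl rfl), fun j hj => h1 j (Or.inr hj), h2⟩
      · rintro ⟨h1, h2, h3⟩
        exact ⟨fun j hj => hj.elim (fun h => h ▸ h1) (h2 j), h3⟩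
    rw [hset, pi_single_coord ν i (f i) _ ?_, ih hBA', Finset.prod_insert hiB, mul_assoc]
    intro ω c hω
    constructor
    · intro j hj
      rw [Function.update_of_ne (fun h : j = i => hiB (h ▸ hj))]
      exact hω.1 j hj
    · refine hE ω _ (fun j hj => ?_) hω.2
      rw [Function.update_of_ne (fun h : j = i => hj (h ▸ hiA))]

end PiBool

lemma bernoulli_true (p : ℝ) : bernoulliMeasure p {true} = ENNReal.ofReal p := by
  simp [bernoulliMeasure, Measure.dirac_apply]

lemma bernoulli_false (p : ℝ) : bernoulliMeasure p {false} = ENNReal.ofReal (1 - p) := by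
  simp [bernoulliMeasure, Measure.dirac_apply]

lemma bernoulli_prob {p : ℝ} (h0 : 0 ≤ p) (h1 : p ≤ 1) :
    IsProbabilityMeasure (bernoulliMeasure p) := by
  constructor
  simp only [bernoulliMeasure, Measure.add_apply, Measure.smul_apply, smul_eq_mul,
    measure_univ, mul_one]
  rw [← ENNReal.ofReal_add h0 (by linarith), add_sub_cancel, ENNReal.ofReal_one]

section Cluster

variable {n : ℕ} (G : SimpleGraph (Fin n))

/-- adjacency within a vertex window `W`, using only open edges -/
def AdjIn (W : Finset (Fin n)) (ω : Sym2 (Fin n) → Bool) (x y : Fin n) : Prop :=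
  G.Adj x y ∧ ω s(x, y) = true ∧ x ∈ W ∧ y ∈ W

/-- the open cluster of `u` inside the window `W` -/
def clusterSet (W : Finset (Fin n)) (ω : Sym2 (Fin n) → Bool) (u : Fin n) : Set (Fin n) :=
  {x | Relation.ReflTransGen (AdjIn G W ω) u x}

def clusterUnion (W R : Finset (Fin n)) (ω : Sym2 (Fin n) → Bool) : Set (Fin n) :=
  ⋃ w ∈ R, clusterSet G W ω w

lemma clusterSet_subset {W : Finset (Fin n)} {ω} {u} (hu : u ∈ W) :
    clusterSet G W ω u ⊆ ↑W := by
  intro x hx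
  induction hx with
  | refl => exact hu
  | tail _ h ih => exact h.2.2.2

lemma clusterUnion_subset {W R : Finset (Fin n)} {ω} (hR : R ⊆ W) :
    clusterUnion G W R ω ⊆ ↑W := by
  intro x hx
  rw [clusterUnion, Set.mem_iUnion₂] at hx
  obtain ⟨w, hw, hx⟩ := hx
  exact clusterSet_subset G (hR hw) hx

/-- the key decomposition: expose the open edges at `u` -/
lemma clusterUnion_decomp (W R : Finset (Fin n)) (ω : Sym2 (Fin n) → Bool) (u : Fin n)
    (hu : u ∈ R) (hR : R ⊆ W) :
    clusterUnion G W R ω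
      = insert u (clusterUnion G (W.erase u)
          ((R.erase u) ∪ (((W.erase u).filter (fun y => G.Adj u y)).filter
            (fun y => ω s(u, y) = true))) ω) := by
  set Nb := ((W.erase u).filter (fun y => G.Adj u y)).filter (fun y => ω s(u, y) = true)
    with hNb
  set W' := W.erase u
  set R' := (R.erase u) ∪ Nb
  have hR'W' : R' ⊆ W' := by
    intro x hx
    rcases Finset.mem_union.1 hx with h | h
    · exact Finset.erase_subset_erase u hR h
    · exact Finset.mem_of_mem_filter x (Finset.mem_of_mem_filter x h)
  apply Set.Subset.antisymm
  · intro x hx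
    rw [clusterUnion, Set.mem_iUnion₂] at hx
    obtain ⟨w, hw, hx⟩ := hx
    induction hx with
    | refl =>
      rcases eq_or_ne w u with rfl | hwu
      · exact Set.mem_insert _ _
      · refine Set.mem_insert_of_mem _ ?_
        rw [clusterUnion, Set.mem_iUnion₂]
        exact ⟨w, Finset.mem_union_left _ (Finset.mem_erase.2 ⟨hwu, hw⟩),
          Relation.ReflTransGen.refl⟩
    | @tail y x hy hyx ih =>
      rcases eq_or_ne x u with rfl | hxu
      · exact Set.mem_insert _ _
      · rcases ih with h | h
        · -- y = u : x is an open neighbour of u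
          refine Set.mem_insert_of_mem _ ?_
          rw [clusterUnion, Set.mem_iUnion₂]
          refine ⟨x, Finset.mem_union_right _ ?_, Relation.ReflTransGen.refl⟩
          rw [hNb]
          subst h
          refine Finset.mem_filter.2 ⟨Finset.mem_filter.2
            ⟨Finset.mem_erase.2 ⟨hxu, hyx.2.2.2⟩, hyx.1⟩, hyx.2.1⟩
        · -- y is already in a cluster of the reduced problem
          refine Set.mem_insert_of_mem _ ?_
          rw [clusterUnion, Set.mem_iUnion₂] at h ⊢
          obtain ⟨w', hw', hy'⟩ := h
          refine ⟨w', hw', hy'.tail ?_⟩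
          have hyW' : y ∈ W' := clusterSet_subset G (hR'W' hw') hy'
          exact ⟨hyx.1, hyx.2.1, hyW', Finset.mem_erase.2 ⟨hxu, hyx.2.2.2⟩⟩
  · intro x hx
    rcases Set.mem_insert_iff.1 hx with rfl | hx
    · rw [clusterUnion, Set.mem_iUnion₂]
      exact ⟨x, hu, Relation.ReflTransGen.refl⟩
    · rw [clusterUnion, Set.mem_iUnion₂] at hx ⊢
      obtain ⟨w, hw, hx⟩ := hx
      have hmono : Relation.ReflTransGen (AdjIn G W' ω) w x →
          Relation.ReflTransGen (AdjIn G W ω) w x := by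
        apply Relation.ReflTransGen.mono
        intro a b hab
        exact ⟨hab.1, hab.2.1, Finset.mem_of_mem_erase hab.2.2.1,
          Finset.mem_of_mem_erase hab.2.2.2⟩
      rcases Finset.mem_union.1 hw with h | h
      · exact ⟨w, Finset.mem_of_mem_erase h, hmono hx⟩
      · refine ⟨u, hu, Relation.ReflTransGen.head ?_ (hmono hx)⟩
        have h1 := Finset.mem_filter.1 h
        have h2 := Finset.mem_filter.1 h1.1
        exact ⟨h2.2, h1.2, hR hu, Finset.mem_of_mem_erase h2.1⟩

/-- clusters only depend on the coordinates with both endpoints in the window -/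
lemma clusterUnion_det (W R : Finset (Fin n)) (ω ω' : Sym2 (Fin n) → Bool)
    (h : ∀ x y : Fin n, x ∈ W → y ∈ W → ω s(x, y) = ω' s(x, y)) :
    clusterUnion G W R ω = clusterUnion G W R ω' := by
  have key : ∀ (σ τ : Sym2 (Fin n) → Bool),
      (∀ x y : Fin n, x ∈ W → y ∈ W → σ s(x, y) = τ s(x, y)) →
      ∀ w, clusterSet G W σ w ⊆ clusterSet G W τ w := by
    intro σ τ hστ w x hx
    induction hx with
    | refl => exact Relation.ReflTransGen.refl
    | tail _ hab ih =>
      exact ih.tail ⟨hab.1, by rw [← hστ _ _ hab.2.2.1 hab.2.2.2]; exact hab.2.1,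
        hab.2.2.1, hab.2.2.2⟩
  rw [clusterUnion, clusterUnion]
  apply Set.Subset.antisymm <;>
    refine Set.iUnion₂_mono fun w _ => ?_
  · exact key ω ω' h w
  · exact key ω' ω (fun x y hx hy => (h x y hx hy).symm) w

/-- the component of `v` in the percolated graph is the full-window cluster -/
lemma supp_eq_cluster (ω : Sym2 (Fin n) → Bool) (v : Fin n) :
    ((percolatedGraph G ω).connectedComponentMk v).supp
      = clusterSet G Finset.univ ω v := by
  ext x
  simp only [SimpleGraph.ConnectedComponent.mem_supp_iff,
    SimpleGraph.ConnectedComponent.eq]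
  rw [clusterSet, Set.mem_setOf_eq]
  have hAdj : ∀ a b : Fin n, (percolatedGraph G ω).Adj a b ↔ AdjIn G Finset.univ ω a b := by
    intro a b
    simp [percolatedGraph, AdjIn]
  constructor
  · intro hr
    have hg := (SimpleGraph.reachable_iff_reflTransGen _ _).1 hr.symm
    exact Relation.ReflTransGen.mono (fun a b hab => (hAdj a b).1 hab) _ _ hg
  · intro hr
    refine SimpleGraph.Reachable.symm ((SimpleGraph.reachable_iff_reflTransGen _ _).2 ?_)
    exact Relation.ReflTransGen.mono (fun a b hab => (hAdj a b).2 hab) _ _ hr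

end Cluster

section Main

variable {n : ℕ}

lemma percolation_prob {p : ℝ} (h0 : 0 ≤ p) (h1 : p ≤ 1) :
    IsProbabilityMeasure (percolationMeasure n p) := by
  haveI := bernoulli_prob h0 h1
  rw [percolationMeasure]
  infer_instance

lemma main_bound (G : SimpleGraph (Fin n)) (p θ γ : ℝ) (d : ℕ)
    (hp0 : 0 ≤ p) (hp1 : p ≤ 1) (hθ : 1 ≤ θ) (hγ0 : 0 ≤ γ)
    (hdeg : ∀ v : Fin n, (Finset.univ.filter (fun y => G.Adj v y)).card ≤ d)
    (hkey : (1 - p + p * θ) ^ d ≤ θ * γ) :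
    ∀ (W R : Finset (Fin n)) (m : ℕ), R ⊆ W →
      percolationMeasure n p {ω | m ≤ (clusterUnion G W R ω).ncard}
        ≤ ENNReal.ofReal θ ^ R.card * ENNReal.ofReal γ ^ m := by
  haveI hbprob := bernoulli_prob hp0 hp1
  haveI hprob := percolation_prob (n := n) hp0 hp1
  have hμ : percolationMeasure n p = Measure.pi fun _ : Sym2 (Fin n) => bernoulliMeasure p := rfl
  have hΘ1 : (1 : ENNReal) ≤ ENNReal.ofReal θ := by
    rw [← ENNReal.ofReal_one]; exact ENNReal.ofReal_le_ofReal hθ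
  intro W
  induction W using Finset.strongInduction with
  | _ W ih =>
    intro R m hRW
    cases m with
    | zero =>
      refine le_trans prob_le_one ?_
      rw [pow_zero, mul_one]
      calc (1 : ENNReal) = 1 ^ R.card := (one_pow _).symm
        _ ≤ ENNReal.ofReal θ ^ R.card := pow_le_pow_left' hΘ1 _
    | succ m' =>
      rcases Finset.eq_empty_or_nonempty R with rfl | ⟨u, hu⟩
      · have hempty : {ω : Sym2 (Fin n) → Bool | m' + 1 ≤ (clusterUnion G W ∅ ω).ncard} = ∅ := by
          ext ω
          simp [clusterUnion]
        rw [hempty]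
        simp
      · -- main step: expose the edges at u
        set W' := W.erase u with hW'
        have hWW' : W' ⊂ W := Finset.erase_ssubset (hRW hu)
        set Nbhd := W'.filter (fun y => G.Adj u y) with hNbhd
        have hNbhd_ne_u : ∀ y ∈ Nbhd, y ≠ u := fun y hy =>
          Finset.ne_of_mem_erase (Finset.mem_of_mem_filter y hy)
        have hinj : ∀ y ∈ Nbhd, ∀ z ∈ Nbhd, s(u, y) = s(u, z) → y = z := by
          intro y hy z hz h
          rcases Sym2.eq_iff.1 h with ⟨-, h2⟩ | ⟨h1, -⟩
          · exact h2
          · exact absurd h1.symm (hNbhd_ne_u z hz)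
        set P1 := ENNReal.ofReal p with hP1
        set P0 := ENNReal.ofReal (1 - p) with hP0
        set Θ := ENNReal.ofReal θ with hΘ
        set Γ := ENNReal.ofReal γ with hΓ
        set E := {ω : Sym2 (Fin n) → Bool | m' + 1 ≤ (clusterUnion G W R ω).ncard} with hEdef
        set Patt := fun N : Finset (Fin n) =>
          {ω : Sym2 (Fin n) → Bool | ∀ y ∈ Nbhd, ω s(u, y) = decide (y ∈ N)} with hPatt
        set R' := fun N : Finset (Fin n) => (R.erase u) ∪ N with hR'
        set E₂ := fun N : Finset (Fin n) =>
          {ω : Sym2 (Fin n) → Bool | m' ≤ (clusterUnion G W' (R' N) ω).ncard} with hE₂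
        set A := fun N : Finset (Fin n) => Nbhd.image (fun y => s(u, y)) with hA
        set f := fun (N : Finset (Fin n)) (e : Sym2 (Fin n)) =>
          decide (∃ y ∈ N, e = s(u, y)) with hf
        have hfval : ∀ N ∈ Nbhd.powerset, ∀ y ∈ Nbhd, f N s(u, y) = decide (y ∈ N) := by
          intro N hN y hy
          have hNsub : N ⊆ Nbhd := Finset.mem_powerset.1 hN
          rw [hf]
          simp only [decide_eq_decide]
          constructor
          · rintro ⟨y', hy', he⟩
            rwa [hinj y hy y' (hNsub hy') he]
          · intro hyN
            exact ⟨y, hyN, rfl⟩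
        have hNsubW' : ∀ N ∈ Nbhd.powerset, R' N ⊆ W' := by
          intro N hN x hx
          rcases Finset.mem_union.1 hx with h | h
          · exact Finset.erase_subset_erase u hRW h
          · exact Finset.mem_of_mem_filter x (Finset.mem_powerset.1 hN h)
        -- on the pattern event, the cluster union decomposes
        have hiffE : ∀ N ∈ Nbhd.powerset, ∀ ω ∈ Patt N, (ω ∈ E ↔ ω ∈ E₂ N) := by
          intro N hN ω hω
          have hNsub : N ⊆ Nbhd := Finset.mem_powerset.1 hN
          have hfilter : (((W.erase u).filter (fun y => G.Adj u y)).filter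
              (fun y => ω s(u, y) = true)) = N := by
            ext y
            rw [Finset.mem_filter]
            constructor
            · rintro ⟨h1, h2⟩
              have := hω y h1
              rw [h2] at this
              exact of_decide_eq_true this.symm
            · intro hyN
              refine ⟨hNsub hyN, ?_⟩
              rw [hω y (hNsub hyN), decide_eq_true_eq]
              exact hyN
          have hdec := clusterUnion_decomp G W R ω u hu hRW
          rw [hfilter] at hdec
          have hnotmem : u ∉ clusterUnion G W' (R' N) ω := by
            intro hmem
            have hsub := clusterUnion_subset G (hNsubW' N hN) hmem
            exact (Finset.notMem_erase u W) hsub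
          have hcard : (clusterUnion G W R ω).ncard
              = (clusterUnion G W' (R' N) ω).ncard + 1 := by
            rw [hdec]
            exact Set.ncard_insert_of_notMem hnotmem (Set.toFinite _)
          rw [hEdef, hE₂]
          simp only [Set.mem_setOf_eq, hcard]
          omega
        -- identification of the pattern event with a coordinate pattern
        have hPatt_eq : ∀ N ∈ Nbhd.powerset,
            Patt N = {ω : Sym2 (Fin n) → Bool | ∀ e ∈ A N, ω e = f N e} := by
          intro N hN
          ext ω
          rw [hPatt, hA]
          simp only [Set.mem_setOf_eq, Finset.mem_image]
          constructor
          · rintro h e ⟨y, hy, rfl⟩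
            rw [hfval N hN y hy]
            exact h y hy
          · intro h y hy
            rw [← hfval N hN y hy]
            exact h s(u, y) ⟨y, hy, rfl⟩
        -- partition of E over patterns
        have hpartition : E = ⋃ N ∈ Nbhd.powerset, E ∩ Patt N := by
          ext ω
          simp only [Set.mem_iUnion, Set.mem_inter_iff]
          constructor
          · intro hω
            refine ⟨Nbhd.filter (fun y => ω s(u, y) = true),
              Finset.mem_powerset.2 (Finset.filter_subset _ _), hω, ?_⟩
            intro y hy
            rcases hb : ω s(u, y) with _ | _ <;>
              simp [Finset.mem_filter, hy, hb]
          · rintro ⟨N, _, hω, _⟩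
            exact hω
        have hdisj : (↑(Nbhd.powerset) : Set (Finset (Fin n))).PairwiseDisjoint
            (fun N => E ∩ Patt N) := by
          intro N hN N' hN' hne
          simp only [Finset.coe_powerset, Set.mem_preimage, Set.mem_powerset_iff,
            Finset.coe_subset] at hN hN'
          show Disjoint (E ∩ Patt N) (E ∩ Patt N')
          rw [Set.disjoint_left]
          rintro ω ⟨-, hω⟩ ⟨-, hω'⟩
          obtain ⟨y, hy⟩ : ∃ y, ¬(y ∈ N ↔ y ∈ N') := by
            by_contra hc
            push_neg at hc
            exact hne (Finset.ext fun y => hc y)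
          have hyNbhd : y ∈ Nbhd := by
            rcases Classical.em (y ∈ N) with h | h
            · exact hN h
            · have : y ∈ N' := by tauto
              exact hN' this
          have h1 := hω y hyNbhd
          have h2 := hω' y hyNbhd
          rw [h1] at h2
          rw [decide_eq_decide] at h2
          exact hy h2
        -- measure of each piece
        have hterm : ∀ N ∈ Nbhd.powerset,
            percolationMeasure n p (E ∩ Patt N)
              ≤ (∏ y ∈ Nbhd, if y ∈ N then P1 * Θ else P0)
                  * (Θ ^ (R.erase u).card * Γ ^ m') := by
          intro N hN
          have hNsub : N ⊆ Nbhd := Finset.mem_powerset.1 hN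
          have hEPatt : E ∩ Patt N
              = {ω : Sym2 (Fin n) → Bool | ∀ e ∈ A N, ω e = f N e} ∩ E₂ N := by
            rw [← hPatt_eq N hN]
            ext ω
            simp only [Set.mem_inter_iff]
            constructor
            · rintro ⟨h1, h2⟩
              exact ⟨h2, (hiffE N hN ω h2).1 h1⟩
            · rintro ⟨h1, h2⟩
              exact ⟨(hiffE N hN ω h1).2 h2, h1⟩
          have hdet : ∀ ω ω', (∀ e, e ∉ A N → ω e = ω' e) → ω ∈ E₂ N → ω' ∈ E₂ N := by
            intro ω ω' hagree hω
            have hcl : clusterUnion G W' (R' N) ω = clusterUnion G W' (R' N) ω' := by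
              apply clusterUnion_det
              intro x y hx hy
              apply hagree
              rw [hA]
              simp only [Finset.mem_image, not_exists, not_and]
              intro y₀ hy₀ heq
              have humem : u ∈ s(x, y) := by
                rw [← heq]
                exact Sym2.mem_mk_left u y₀
              rcases Sym2.mem_iff.1 humem with rfl | rfl
              · exact (Finset.notMem_erase u W) hx
              · exact (Finset.notMem_erase u W) hy
            rw [hE₂, Set.mem_setOf_eq] at hω ⊢
            rwa [← hcl]
          have hindep := pi_pattern_indep (bernoulliMeasure p) (A N) (f N) (E₂ N)
            (fun ω ω' hh => hdet ω ω' (fun e he => hh e he)) (A N) subset_rfl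
          rw [hEPatt, hμ, hindep]
          have hprodA : (∏ e ∈ A N, bernoulliMeasure p {f N e})
              = ∏ y ∈ Nbhd, (if y ∈ N then P1 else P0) := by
            rw [hA, Finset.prod_image hinj]
            refine Finset.prod_congr rfl fun y hy => ?_
            rw [hfval N hN y hy]
            rcases Classical.em (y ∈ N) with h | h
            · simp only [h, decide_true, if_true]
              exact bernoulli_true p
            · simp only [h, decide_false, if_false]
              exact bernoulli_false p
          have hIH : (Measure.pi fun _ : Sym2 (Fin n) => bernoulliMeasure p) (E₂ N)
              ≤ Θ ^ (R' N).card * Γ ^ m' := by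
            rw [← hμ]
            exact ih W' hWW' (R' N) m' (hNsubW' N hN)
          have hcardle : Θ ^ (R' N).card ≤ Θ ^ ((R.erase u).card + N.card) :=
            pow_le_pow_right' hΘ1 (le_trans (Finset.card_union_le _ _) le_rfl)
          have hΘN : Θ ^ N.card = ∏ y ∈ Nbhd, (if y ∈ N then Θ else 1) := by
            rw [Finset.prod_ite_mem, Finset.inter_comm, Finset.inter_eq_left.2 hNsub,
              Finset.prod_const]
          calc (∏ e ∈ A N, bernoulliMeasure p {f N e})
                * (Measure.pi fun _ : Sym2 (Fin n) => bernoulliMeasure p) (E₂ N)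
              ≤ (∏ y ∈ Nbhd, (if y ∈ N then P1 else P0))
                  * (Θ ^ ((R.erase u).card + N.card) * Γ ^ m') := by
                rw [hprodA]
                exact mul_le_mul_right (le_trans hIH
                  (mul_le_mul_left hcardle _)) _
            _ = ((∏ y ∈ Nbhd, (if y ∈ N then P1 else P0))
                  * ∏ y ∈ Nbhd, (if y ∈ N then Θ else 1))
                  * (Θ ^ (R.erase u).card * Γ ^ m') := by
                rw [← hΘN, pow_add]
                ring
            _ = (∏ y ∈ Nbhd, if y ∈ N then P1 * Θ else P0)
                  * (Θ ^ (R.erase u).card * Γ ^ m') := by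
                rw [← Finset.prod_mul_distrib]
                congr 1
                refine Finset.prod_congr rfl fun y _ => ?_
                split_ifs <;> ring
        -- sum the pieces
        have ha : Nbhd.card ≤ d := by
          refine le_trans (Finset.card_le_card ?_) (hdeg u)
          intro y hy
          rw [Finset.mem_filter] at hy ⊢
          exact ⟨Finset.mem_univ y, hy.2⟩
        have hbase1 : (1 : ENNReal) ≤ P1 * Θ + P0 := by
          calc (1 : ENNReal) = P1 + P0 := by
                rw [hP1, hP0, ← ENNReal.ofReal_add hp0 (by linarith), add_sub_cancel,
                  ENNReal.ofReal_one]
            _ ≤ P1 * Θ + P0 := by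
                refine add_le_add_left ?_ _
                nth_rewrite 1 [← mul_one P1]
                exact mul_le_mul_right hΘ1 _
        have hsumN : ∑ N ∈ Nbhd.powerset, (∏ y ∈ Nbhd, if y ∈ N then P1 * Θ else P0)
            = (P1 * Θ + P0) ^ Nbhd.card := by
          have hpa : (P1 * Θ + P0) ^ Nbhd.card
              = ∑ t ∈ Nbhd.powerset, (∏ _y ∈ t, (P1 * Θ)) * ∏ _y ∈ Nbhd \ t, P0 := by
            rw [← Finset.prod_const, Finset.prod_add]
          rw [hpa]
          refine Finset.sum_congr rfl fun N hN => ?_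
          have hNsub : N ⊆ Nbhd := Finset.mem_powerset.1 hN
          conv_lhs => rw [← Finset.union_sdiff_of_subset hNsub]
          rw [Finset.prod_union Finset.disjoint_sdiff]
          congr 1
          · exact Finset.prod_congr rfl fun y hy => if_pos hy
          · exact Finset.prod_congr rfl fun y hy => if_neg (Finset.mem_sdiff.1 hy).2
        have hθ0 : (0 : ℝ) ≤ θ := le_trans zero_le_one hθ
        have hfinal : (P1 * Θ + P0) ^ Nbhd.card ≤ Θ * Γ := by
          calc (P1 * Θ + P0) ^ Nbhd.card ≤ (P1 * Θ + P0) ^ d := pow_le_pow_right' hbase1 ha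
            _ = ENNReal.ofReal ((1 - p + p * θ) ^ d) := by
                rw [hP1, hP0, hΘ, ← ENNReal.ofReal_mul hp0,
                  ← ENNReal.ofReal_add (mul_nonneg hp0 hθ0) (by linarith),
                  ← ENNReal.ofReal_pow (by nlinarith)]
                congr 1
                ring
            _ ≤ ENNReal.ofReal (θ * γ) := ENNReal.ofReal_le_ofReal hkey
            _ = Θ * Γ := ENNReal.ofReal_mul hθ0
        have hrc : (R.erase u).card + 1 = R.card := Finset.card_erase_add_one hu
        calc percolationMeasure n p E
            = ∑ N ∈ Nbhd.powerset, percolationMeasure n p (E ∩ Patt N) := by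
              conv_lhs => rw [hpartition]
              exact measure_biUnion_finset hdisj (fun _ _ => measurableSet_all _)
          _ ≤ ∑ N ∈ Nbhd.powerset, (∏ y ∈ Nbhd, if y ∈ N then P1 * Θ else P0)
                * (Θ ^ (R.erase u).card * Γ ^ m') := Finset.sum_le_sum hterm
          _ = (∑ N ∈ Nbhd.powerset, ∏ y ∈ Nbhd, if y ∈ N then P1 * Θ else P0)
                * (Θ ^ (R.erase u).card * Γ ^ m') := by rw [Finset.sum_mul]
          _ = (P1 * Θ + P0) ^ Nbhd.card * (Θ ^ (R.erase u).card * Γ ^ m') := by rw [hsumN]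
          _ ≤ (Θ * Γ) * (Θ ^ (R.erase u).card * Γ ^ m') := mul_le_mul_left hfinal _
          _ = Θ ^ ((R.erase u).card + 1) * Γ ^ (m' + 1) := by ring
          _ = Θ ^ R.card * Γ ^ (m' + 1) := by rw [hrc]

end Main

lemma clusterUnion_singleton {n : ℕ} (G : SimpleGraph (Fin n)) (W : Finset (Fin n))
    (ω : Sym2 (Fin n) → Bool) (v : Fin n) :
    clusterUnion G W {v} ω = clusterSet G W ω v := by
  simp [clusterUnion]

theorem stmt0 (α : ℝ) (hα0 : 0 < α) (hα1 : α < 1)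
    (d : ℕ → ℕ) (G : ∀ n : ℕ, SimpleGraph (Fin n))
    (hreg : ∀ n, regularOfDegree (G n) (d n))
    (hd : Tendsto (fun n => (d n : ℝ)) atTop atTop)
    (hlam : Tendsto (fun n => secondEigenvalue (G n) (d n) / (d n : ℝ)) atTop (nhds 0)) :
    ∃ C : ℝ, 0 < C ∧
      Tendsto (fun n =>
        ((percolationMeasure n (α / (d n : ℝ)))
          {ω | ∀ c : (percolatedGraph (G n) ω).ConnectedComponent,
              (componentOrder _ c : ℝ) ≤ C * Real.log n}).toReal)
        atTop (nhds 1) := by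
  classical
  set θ : ℝ := 1 / α with hθdef
  set γ : ℝ := α * Real.exp (1 - α) with hγdef
  have hθ1 : 1 ≤ θ := by
    rw [hθdef, le_div_iff₀ hα0, one_mul]
    exact le_of_lt hα1
  have hθ0 : 0 < θ := lt_of_lt_of_le one_pos hθ1
  have hγpos : 0 < γ := mul_pos hα0 (Real.exp_pos _)
  have hγ1 : γ < 1 := by
    have h1 : Real.log α < α - 1 := Real.log_lt_sub_one_of_pos hα0 (ne_of_lt hα1)
    have h2 : Real.exp (1 - α) < 1 / α := by
      rw [← Real.exp_log (by positivity : (0:ℝ) < 1 / α)]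
      apply Real.exp_lt_exp.2
      rw [Real.log_div one_ne_zero (ne_of_gt hα0), Real.log_one]
      linarith
    calc γ = α * Real.exp (1 - α) := hγdef
      _ < α * (1 / α) := by exact mul_lt_mul_of_pos_left h2 hα0
      _ = 1 := by field_simp
  have hlogγ : Real.log γ < 0 := Real.log_neg hγpos hγ1
  set C : ℝ := 2 / (-Real.log γ) with hCdef
  have hC : 0 < C := by
    rw [hCdef]
    apply div_pos two_pos
    linarith
  refine ⟨C, hC, ?_⟩
  -- the key per-n estimate, for n large
  have hkey : ∀ᶠ n : ℕ in atTop,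
      1 - θ / n ≤ ((percolationMeasure n (α / (d n : ℝ)))
          {ω | ∀ c : (percolatedGraph (G n) ω).ConnectedComponent,
              (componentOrder _ c : ℝ) ≤ C * Real.log n}).toReal
        ∧ ((percolationMeasure n (α / (d n : ℝ)))
          {ω | ∀ c : (percolatedGraph (G n) ω).ConnectedComponent,
              (componentOrder _ c : ℝ) ≤ C * Real.log n}).toReal ≤ 1 := by
    filter_upwards [hd.eventually_ge_atTop 1, eventually_ge_atTop 1] with n hdn hn1
    set p : ℝ := α / d n with hpdef
    have hdn0 : (0:ℝ) < d n := lt_of_lt_of_le one_pos hdn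
    have hp0 : 0 ≤ p := by positivity
    have hp1 : p ≤ 1 := by
      rw [hpdef, div_le_one hdn0]
      linarith
    haveI hprob := percolation_prob (n := n) hp0 hp1
    have hdeg : ∀ v : Fin n, (Finset.univ.filter (fun y => (G n).Adj v y)).card ≤ d n := by
      intro v
      refine le_of_eq ?_
      have hns : (G n).neighborSet v = ↑(Finset.univ.filter (fun y => (G n).Adj v y)) := by
        ext y
        simp [SimpleGraph.neighborSet]
      have := hreg n v
      rwa [Nat.card_coe_set_eq, hns, Set.ncard_coe_finset] at this
    have hkey2 : (1 - p + p * θ) ^ (d n) ≤ θ * γ := by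
      have hbase : 0 ≤ 1 - p + p * θ := by nlinarith
      have h1 : 1 - p + p * θ = p * (θ - 1) + 1 := by ring
      have h2 : (1 - p + p * θ) ^ (d n) ≤ Real.exp (p * (θ - 1)) ^ (d n) := by
        apply pow_le_pow_left₀ hbase
        rw [h1]
        exact Real.add_one_le_exp _
      have h3 : Real.exp (p * (θ - 1)) ^ (d n) = Real.exp (p * (θ - 1) * d n) := by
        rw [← Real.exp_nat_mul]
        ring_nf
      have h4 : p * (θ - 1) * d n = 1 - α := by
        rw [hpdef, hθdef]
        field_simp
      have h5 : θ * γ = Real.exp (1 - α) := by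
        rw [hθdef, hγdef]
        field_simp
      rw [h5]
      calc (1 - p + p * θ) ^ (d n) ≤ Real.exp (p * (θ - 1)) ^ (d n) := h2
        _ = Real.exp (1 - α) := by rw [h3, h4]
    -- the bad event is contained in a union of cluster events
    set T := {ω : Sym2 (Fin n) → Bool |
        ∀ c : (percolatedGraph (G n) ω).ConnectedComponent,
          (componentOrder _ c : ℝ) ≤ C * Real.log n} with hT
    set m : ℕ := ⌊C * Real.log n⌋₊ + 1 with hm
    have hlogn0 : 0 ≤ C * Real.log n := by
      have : (0:ℝ) ≤ Real.log n := Real.log_nonneg (by exact_mod_cast hn1)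
      positivity
    have hTc : Tᶜ ⊆ ⋃ v ∈ (Finset.univ : Finset (Fin n)),
        {ω : Sym2 (Fin n) → Bool | m ≤ (clusterUnion (G n) Finset.univ {v} ω).ncard} := by
      intro ω hω
      rw [hT, Set.mem_compl_iff, Set.mem_setOf_eq] at hω
      push_neg at hω
      obtain ⟨c, hc⟩ := hω
      obtain ⟨v, rfl⟩ := c.exists_rep
      rw [Set.mem_iUnion₂]
      refine ⟨v, Finset.mem_univ v, ?_⟩
      rw [Set.mem_setOf_eq, clusterUnion_singleton]
      have horder : (componentOrder (percolatedGraph (G n) ω)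
          ((percolatedGraph (G n) ω).connectedComponentMk v))
            = (clusterSet (G n) Finset.univ ω v).ncard := by
        rw [componentOrder, Nat.card_coe_set_eq, supp_eq_cluster]
      have hc2 : C * Real.log ↑n < ((clusterSet (G n) Finset.univ ω v).ncard : ℝ) := by
        rw [← horder]
        exact_mod_cast hc
      rw [hm]
      have := (Nat.floor_lt hlogn0).2 hc2
      omega
    have hmain := main_bound (G n) p θ γ (d n) hp0 hp1 hθ1 (le_of_lt hγpos) hdeg hkey2
    have hTcbound : percolationMeasure n p Tᶜ
        ≤ (n : ENNReal) * (ENNReal.ofReal θ * ENNReal.ofReal γ ^ m) := by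
      calc percolationMeasure n p Tᶜ
          ≤ ∑ v ∈ (Finset.univ : Finset (Fin n)), percolationMeasure n p
            {ω : Sym2 (Fin n) → Bool | m ≤ (clusterUnion (G n) Finset.univ {v} ω).ncard} :=
            le_trans (measure_mono hTc) (measure_biUnion_finset_le _ _)
        _ ≤ ∑ v ∈ (Finset.univ : Finset (Fin n)),
              (ENNReal.ofReal θ * ENNReal.ofReal γ ^ m) := by
            refine Finset.sum_le_sum fun v _ => ?_
            have h := hmain Finset.univ {v} m (Finset.subset_univ _)
            simpa using h
        _ = (n : ENNReal) * (ENNReal.ofReal θ * ENNReal.ofReal γ ^ m) := by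
            simp [Finset.sum_const, Finset.card_univ, nsmul_eq_mul]
    have hTcreal : (percolationMeasure n p Tᶜ).toReal ≤ θ / n := by
      have hne : ((n : ENNReal) * (ENNReal.ofReal θ * ENNReal.ofReal γ ^ m)) ≠ ⊤ := by
        refine ENNReal.mul_ne_top (ENNReal.natCast_ne_top n) ?_
        exact ENNReal.mul_ne_top ENNReal.ofReal_ne_top
          (ENNReal.pow_ne_top ENNReal.ofReal_ne_top)
      have h1 := ENNReal.toReal_mono hne hTcbound
      have h2 : ((n : ENNReal) * (ENNReal.ofReal θ * ENNReal.ofReal γ ^ m)).toReal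
          = n * (θ * γ ^ m) := by
        rw [ENNReal.toReal_mul, ENNReal.toReal_mul, ENNReal.toReal_pow,
          ENNReal.toReal_ofReal (le_of_lt hθ0),
          ENNReal.toReal_ofReal (le_of_lt hγpos)]
        simp
      rw [h2] at h1
      refine le_trans h1 ?_
      -- n * (θ * γ ^ m) ≤ θ / n  since γ ^ m ≤ n⁻²
      have hγm : γ ^ m ≤ Real.exp (C * Real.log n * Real.log γ) := by
        have hx : (γ : ℝ) ^ m = Real.exp (Real.log γ * m) := by
          rw [← Real.rpow_natCast γ m, Real.rpow_def_of_pos hγpos]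
        rw [hx]
        apply Real.exp_le_exp.2
        have hmge : C * Real.log n ≤ (m : ℝ) := by
          rw [hm]
          push_cast
          exact le_of_lt (Nat.lt_floor_add_one _)
        calc Real.log γ * m ≤ Real.log γ * (C * Real.log n) := by
              exact mul_le_mul_of_nonpos_left hmge (le_of_lt hlogγ)
          _ = C * Real.log n * Real.log γ := by ring
      have hClog : C * Real.log n * Real.log γ = -2 * Real.log n := by
        have hstep : C * Real.log ↑n * Real.log γ
            = 2 * Real.log n * (Real.log γ / -Real.log γ) := by
          rw [hCdef]
          ring
        rw [hstep, div_neg, div_self (ne_of_lt hlogγ)]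
        ring
      have hexp : Real.exp (C * Real.log n * Real.log γ) = ((n:ℝ) ^ 2)⁻¹ := by
        rw [hClog]
        rw [show (-2 : ℝ) * Real.log n = -(2 * Real.log n) by ring, Real.exp_neg]
        congr 1
        rw [show (2 : ℝ) * Real.log n = Real.log n + Real.log n by ring, Real.exp_add,
          Real.exp_log (by exact_mod_cast lt_of_lt_of_le one_pos hn1 : (0:ℝ) < n)]
        ring
      have hn0 : (0:ℝ) < n := by exact_mod_cast lt_of_lt_of_le one_pos hn1
      calc (n:ℝ) * (θ * γ ^ m) ≤ n * (θ * ((n:ℝ)^2)⁻¹) := by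
            refine mul_le_mul_of_nonneg_left ?_ (le_of_lt hn0)
            refine mul_le_mul_of_nonneg_left ?_ (le_of_lt hθ0)
            rw [← hexp]
            exact hγm
        _ = θ / n := by
            field_simp
    constructor
    · -- lower bound on the good probability
      have hmeas : MeasurableSet T := measurableSet_all T
      have hcompl : percolationMeasure n p T = 1 - percolationMeasure n p Tᶜ := by
        rw [← prob_compl_eq_one_sub hmeas.compl, compl_compl]
      have hle1 : percolationMeasure n p Tᶜ ≤ 1 := prob_le_one
      rw [hcompl, ENNReal.toReal_sub_of_le hle1 ENNReal.one_ne_top, ENNReal.toReal_one]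
      linarith [hTcreal]
    · exact ENNReal.toReal_le_of_le_ofReal one_pos.le (by simpa using prob_le_one)
  -- squeeze
  have hlow : Tendsto (fun n : ℕ => 1 - θ / n) atTop (nhds 1) := by
    have h := tendsto_const_div_atTop_nhds_zero_nat θ
    have h2 : Tendsto (fun n : ℕ => (1:ℝ) - θ / n) atTop (nhds (1 - 0)) :=
      Tendsto.sub tendsto_const_nhds h
    simpa using h2
  refine tendsto_of_tendsto_of_tendsto_of_le_of_le' hlow tendsto_const_nhds ?_ ?_
  · filter_upwards [hkey] with n hn using hn.1
  · filter_upwards [hkey] with n hn using hn.2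
end

section
/- Let G be a d-regular simple graph on vertex set V of size n with λ = λ(G) the maximum absolute value of its adjacency-matrix eigenvalues other than the largest. For subsets B, C ⊆ V with |B| = bn and |C| = cn (B = C allowed), let e(B,C) denote the number of ordered pairs (u,v) with u ∈ B, v ∈ C and {u,v} an edge of G. Then |e(B,C) − b·c·d·n| ≤ λ·n·√(bc). -/
open MeasureTheory Filter

open Polynomial Matrix

lemma my_charpoly_conj {n : Type*} [Fintype n] [DecidableEq n] {R : Type*} [CommRing R]
    (U D V : Matrix n n R) (hUV : U * V = 1) (hVU : V * U = 1) :
    (U * D * V).charpoly = D.charpoly := by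
  have hone : (U.map (C : R →+* R[X])) * (V.map C) = 1 := by
    rw [← Matrix.map_mul, hUV, Matrix.map_one _ (map_zero C) (map_one C)]
  have h1 : charmatrix (U * D * V) = (U.map C) * charmatrix D * (V.map C) := by
    simp only [charmatrix, RingHom.mapMatrix_apply, Matrix.mul_sub, Matrix.sub_mul]
    congr 1
    · rw [scalar_apply, ← smul_one_eq_diagonal, Matrix.mul_smul, Matrix.smul_mul, Matrix.mul_one, hone]
    · rw [← Matrix.map_mul, ← Matrix.map_mul]
  unfold Matrix.charpoly
  have hone' : (V.map (C : R →+* R[X])) * (U.map C) = 1 := by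
    rw [← Matrix.map_mul, hVU, Matrix.map_one _ (map_zero C) (map_one C)]
  rw [h1, det_mul, det_mul, mul_comm, ← mul_assoc, ← det_mul, hone', det_one, one_mul]

lemma my_charpoly_diagonal {n : Type*} [Fintype n] [DecidableEq n] {R : Type*} [CommRing R]
    (μ : n → R) : (Matrix.diagonal μ).charpoly = ∏ i, (X - C (μ i)) := by
  unfold Matrix.charpoly
  have h : charmatrix (Matrix.diagonal μ) = Matrix.diagonal (fun i => X - C (μ i)) := by
    ext i j
    by_cases h : i = j
    · subst h; simp [charmatrix_apply_eq]
    · simp [charmatrix_apply_ne _ _ _ h, Matrix.diagonal_apply_ne _ h]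
  rw [h, det_diagonal]

lemma my_roots_charpoly {n : Type*} [Fintype n] [DecidableEq n] {A : Matrix n n ℝ}
    (hA : A.IsHermitian) :
    A.charpoly.roots = Finset.univ.val.map hA.eigenvalues := by
  have hU1 : (hA.eigenvectorUnitary : Matrix n n ℝ) * star (hA.eigenvectorUnitary : Matrix n n ℝ)
      = 1 := Matrix.mem_unitaryGroup_iff.mp hA.eigenvectorUnitary.2
  have hU2 : star (hA.eigenvectorUnitary : Matrix n n ℝ) * (hA.eigenvectorUnitary : Matrix n n ℝ)
      = 1 := Matrix.mem_unitaryGroup_iff'.mp hA.eigenvectorUnitary.2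
  have hD : Matrix.diagonal ((RCLike.ofReal : ℝ → ℝ) ∘ hA.eigenvalues)
      = Matrix.diagonal hA.eigenvalues := by
    congr 1
  have := hA.spectral_theorem
  calc A.charpoly.roots
      = (Matrix.diagonal hA.eigenvalues).charpoly.roots := by
        conv_lhs => rw [hA.spectral_theorem]
        rw [Unitary.conjStarAlgAut_apply]
        rw [my_charpoly_conj _ _ _ hU1 hU2, hD]
    _ = Finset.univ.val.map hA.eigenvalues := by
        rw [my_charpoly_diagonal, Finset.prod_eq_multiset_prod,
          show Multiset.map (fun i => Polynomial.X - Polynomial.C (hA.eigenvalues i))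
              Finset.univ.val
            = Multiset.map (fun a => Polynomial.X - Polynomial.C a)
              (Multiset.map hA.eigenvalues Finset.univ.val) from (Multiset.map_map (fun a => Polynomial.X - Polynomial.C a) hA.eigenvalues Finset.univ.val).symm,
          Polynomial.roots_multiset_prod_X_sub_C]

lemma secondEigenvalue_nonneg {n : ℕ} (G : SimpleGraph (Fin n)) (d : ℕ) :
    0 ≤ secondEigenvalue G d := by
  unfold secondEigenvalue
  exact NNReal.coe_nonneg _

lemma abs_le_secondEigenvalue {n : ℕ} (G : SimpleGraph (Fin n)) (d : ℕ) {x : ℝ} :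
    letI : DecidableEq ℝ := Classical.decEq ℝ
    letI : DecidableRel G.Adj := fun _ _ => Classical.dec _
    x ∈ ((SimpleGraph.adjMatrix ℝ G).charpoly.roots.erase ((d : ℝ))) →
      |x| ≤ secondEigenvalue G d := by
  intro hx
  unfold secondEigenvalue
  calc |x| = ((Real.toNNReal |x| : NNReal) : ℝ) := (Real.coe_toNNReal _ (abs_nonneg x)).symm
    _ ≤ _ := by
        apply NNReal.coe_le_coe.2
        apply Multiset.le_sup
        exact Multiset.mem_map_of_mem _ hx

set_option maxHeartbeats 1000000 in
theorem stmt7 {n : ℕ} (G : SimpleGraph (Fin n)) (d : ℕ) (hreg : regularOfDegree G d)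
    (B C : Set (Fin n)) (b c : ℝ)
    (hB : (Nat.card B : ℝ) = b * n) (hC : (Nat.card C : ℝ) = c * n) :
    |(Nat.card {p : Fin n × Fin n // p.1 ∈ B ∧ p.2 ∈ C ∧ G.Adj p.1 p.2} : ℝ)
        - b * c * d * n| ≤ secondEigenvalue G d * n * Real.sqrt (b * c) := by
  letI instE : DecidableEq ℝ := Classical.decEq ℝ
  letI instA : DecidableRel G.Adj := fun _ _ => Classical.dec _
  classical
  rcases Nat.eq_zero_or_pos n with hn | hn
  · subst hn
    have h0 : (Nat.card {p : Fin 0 × Fin 0 // p.1 ∈ B ∧ p.2 ∈ C ∧ G.Adj p.1 p.2} : ℝ) = 0 := by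
      simp
    rw [h0]
    simp
  have hn' : (0:ℝ) < n := by exact_mod_cast hn
  have hsec0 : 0 ≤ secondEigenvalue G d := secondEigenvalue_nonneg G d
  set A : Matrix (Fin n) (Fin n) ℝ := G.adjMatrix ℝ with hAdef
  have hA : A.IsHermitian := by
    have h := G.isSymm_adjMatrix (α := ℝ)
    ext i j
    simp only [Matrix.conjTranspose_apply, star_trivial]
    exact congrFun (congrFun h i) j
  set x : Fin n → ℝ := fun u => if u ∈ B then 1 else 0 with hxdef
  set y : Fin n → ℝ := fun u => if u ∈ C then 1 else 0 with hydef
  set v : Fin n → ℝ := Function.const (Fin n) (1:ℝ) with hvdef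
  -- regularity
  have hd : G.IsRegularOfDegree d := by
    intro u
    have h := hreg u
    rwa [Nat.card_eq_fintype_card, SimpleGraph.card_neighborSet_eq_degree] at h
  have hAv : A *ᵥ v = (d:ℝ) • v := by
    funext u
    rw [hvdef]
    rw [SimpleGraph.adjMatrix_mulVec_const_apply_of_regular hd]
    simp
  -- basic dot products
  have hBsum : (∑ u : Fin n, (if u ∈ B then (1:ℝ) else 0)) = b * n := by
    rw [← hB, Nat.card_eq_fintype_card, Fintype.card_subtype, Finset.card_filter]
    push_cast
    exact Finset.sum_congr rfl fun u _ => by by_cases h : u ∈ B <;> simp [h]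
  have hCsum : (∑ u : Fin n, (if u ∈ C then (1:ℝ) else 0)) = c * n := by
    rw [← hC, Nat.card_eq_fintype_card, Fintype.card_subtype, Finset.card_filter]
    push_cast
    exact Finset.sum_congr rfl fun u _ => by by_cases h : u ∈ C <;> simp [h]
  have hxx : x ⬝ᵥ x = b * n := by
    rw [← hBsum, dotProduct]
    exact Finset.sum_congr rfl fun u _ => by by_cases h : u ∈ B <;> simp [hxdef, h]
  have hxv : x ⬝ᵥ v = b * n := by
    rw [← hBsum, dotProduct]
    exact Finset.sum_congr rfl fun u _ => by by_cases h : u ∈ B <;> simp [hxdef, hvdef, h]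
  have hyy : y ⬝ᵥ y = c * n := by
    rw [← hCsum, dotProduct]
    exact Finset.sum_congr rfl fun u _ => by by_cases h : u ∈ C <;> simp [hydef, h]
  have hvy : v ⬝ᵥ y = c * n := by
    rw [← hCsum, dotProduct]
    exact Finset.sum_congr rfl fun u _ => by by_cases h : u ∈ C <;> simp [hydef, hvdef, h]
  have hvx : v ⬝ᵥ x = b * n := by rw [dotProduct_comm]; exact hxv
  have hyv : y ⬝ᵥ v = c * n := by rw [dotProduct_comm]; exact hvy
  have hvv : v ⬝ᵥ v = (n : ℝ) := by simp [hvdef, dotProduct]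
  have hb : 0 ≤ b := by
    have hbn : 0 ≤ b * n := hB ▸ Nat.cast_nonneg _
    exact (mul_nonneg_iff_of_pos_right hn').mp hbn
  have hc : 0 ≤ c := by
    have hcn : 0 ≤ c * n := hC ▸ Nat.cast_nonneg _
    exact (mul_nonneg_iff_of_pos_right hn').mp hcn
  -- the count as a quadratic form
  have hcard : (Nat.card {p : Fin n × Fin n // p.1 ∈ B ∧ p.2 ∈ C ∧ G.Adj p.1 p.2} : ℝ)
      = x ⬝ᵥ (A *ᵥ y) := by
    rw [hAdef, SimpleGraph.dotProduct_mulVec_adjMatrix,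
      Nat.card_eq_fintype_card, Fintype.card_subtype, Finset.card_filter]
    push_cast
    rw [Fintype.sum_prod_type]
    refine Finset.sum_congr rfl fun i _ => Finset.sum_congr rfl fun j _ => ?_
    by_cases h1 : i ∈ B <;> by_cases h2 : j ∈ C <;> by_cases h3 : G.Adj i j <;>
      simp [hxdef, hydef, h1, h2, h3]
  -- symmetry consequence
  have hvA : ∀ w : Fin n → ℝ, v ⬝ᵥ (A *ᵥ w) = (d:ℝ) * (v ⬝ᵥ w) := by
    intro w
    rw [Matrix.dotProduct_mulVec]
    have hAT : Aᵀ = A := G.isSymm_adjMatrix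
    have h1 : v ᵥ* A = A *ᵥ v := by
      rw [← Matrix.mulVec_transpose, hAT]
    rw [h1, hAv, smul_dotProduct, smul_eq_mul]
  set x' : Fin n → ℝ := x - b • v with hx'def
  set y' : Fin n → ℝ := y - c • v with hy'def
  have key : x' ⬝ᵥ (A *ᵥ y') = x ⬝ᵥ (A *ᵥ y) - b * c * d * n := by
    have hAy' : A *ᵥ y' = A *ᵥ y - (c * d) • v := by
      rw [hy'def, Matrix.mulVec_sub, Matrix.mulVec_smul, hAv, smul_smul]
    rw [hx'def, hAy']
    rw [sub_dotProduct, dotProduct_sub, dotProduct_sub,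
      dotProduct_smul, smul_dotProduct, smul_dotProduct,
      dotProduct_smul]
    rw [hvA y, hxv, hvy, hvv]
    simp only [smul_eq_mul]
    ring
  have hx'x' : x' ⬝ᵥ x' = b * n - b^2 * n := by
    rw [hx'def, sub_dotProduct, dotProduct_sub, dotProduct_sub,
      dotProduct_smul, smul_dotProduct, smul_dotProduct,
      dotProduct_smul, hxx, hxv, hvx, hvv]
    simp only [smul_eq_mul]
    ring
  have hy'y' : y' ⬝ᵥ y' = c * n - c^2 * n := by
    rw [hy'def, sub_dotProduct, dotProduct_sub, dotProduct_sub,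
      dotProduct_smul, smul_dotProduct, smul_dotProduct,
      dotProduct_smul, hyy, hvy, hyv, hvv]
    simp only [smul_eq_mul]
    ring
  have hx'v : x' ⬝ᵥ v = 0 := by
    rw [hx'def, sub_dotProduct, smul_dotProduct, hxv, hvv]
    simp
  -- spectral setup
  set U : Matrix (Fin n) (Fin n) ℝ := (hA.eigenvectorUnitary : Matrix (Fin n) (Fin n) ℝ)
    with hUdef
  set μ : Fin n → ℝ := hA.eigenvalues with hμdef
  have hU1 : U * star U = 1 := Matrix.mem_unitaryGroup_iff.mp hA.eigenvectorUnitary.2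
  have hU2 : star U * U = 1 := Matrix.mem_unitaryGroup_iff'.mp hA.eigenvectorUnitary.2
  have hspec : A = U * Matrix.diagonal μ * star U := by
    have hD : Matrix.diagonal ((RCLike.ofReal : ℝ → ℝ) ∘ hA.eigenvalues)
        = Matrix.diagonal μ := by congr 1
    have := hA.spectral_theorem
    rwa [hD] at this
  have hvecmul : ∀ z : Fin n → ℝ, z ᵥ* U = star U *ᵥ z := by
    intro z
    funext j
    simp [Matrix.vecMul, Matrix.mulVec, dotProduct, Matrix.star_apply, mul_comm]
  set p : Fin n → ℝ := star U *ᵥ x' with hpdef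
  set q : Fin n → ℝ := star U *ᵥ y' with hqdef
  set r : Fin n → ℝ := star U *ᵥ v with hrdef
  have hnorm : ∀ z : Fin n → ℝ, (star U *ᵥ z) ⬝ᵥ (star U *ᵥ z) = z ⬝ᵥ z := by
    intro z
    nth_rewrite 1 [← hvecmul z]
    rw [← Matrix.dotProduct_mulVec, Matrix.mulVec_mulVec, hU1, Matrix.one_mulVec]
  have hUr : U *ᵥ r = v := by
    rw [hrdef, Matrix.mulVec_mulVec, hU1, Matrix.one_mulVec]
  have h2 : x' ⬝ᵥ (A *ᵥ y') = ∑ i, μ i * (p i * q i) := by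
    rw [hspec, ← Matrix.mulVec_mulVec, ← Matrix.mulVec_mulVec, Matrix.dotProduct_mulVec,
      hvecmul x']
    rw [dotProduct]
    exact Finset.sum_congr rfl fun i _ => by rw [Matrix.mulVec_diagonal]; ring
  have hDr : ∀ j, μ j * r j = (d:ℝ) * r j := by
    intro j
    have h1 : star U *ᵥ (A *ᵥ v) = Matrix.diagonal μ *ᵥ r := by
      rw [hspec, ← Matrix.mulVec_mulVec, ← Matrix.mulVec_mulVec, Matrix.mulVec_mulVec (M := star U),
        hU2, Matrix.one_mulVec]
    have h2' : star U *ᵥ (A *ᵥ v) = (d:ℝ) • r := by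
      rw [hAv, Matrix.mulVec_smul]
    have h3' := h1.symm.trans h2'
    have := congrFun h3' j
    rwa [Matrix.mulVec_diagonal, Pi.smul_apply, smul_eq_mul] at this
  have hroots : A.charpoly.roots = Finset.univ.val.map μ := my_roots_charpoly hA
  -- coefficient bound
  have hcoef : ∀ i, |μ i * (p i * q i)| ≤ secondEigenvalue G d * (|p i| * |q i|) := by
    intro i
    by_cases hp : p i = 0
    · simp [hp]
    by_cases hq : q i = 0
    · simp [hq]
    have habs : |μ i| ≤ secondEigenvalue G d := by
      apply abs_le_secondEigenvalue G d
      show μ i ∈ (A.charpoly.roots).erase ((d:ℝ))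
      rw [hroots]
      have hmem : μ i ∈ Finset.univ.val.map μ :=
        Multiset.mem_map_of_mem μ ((by rw [Finset.mem_val]; exact Finset.mem_univ i))
      by_cases hμi : μ i = (d:ℝ)
      · -- ∃ j ≠ i with μ j = d, then count ≥ 2
        have hj : ∃ j, j ≠ i ∧ μ j = (d:ℝ) := by
          by_contra hcon
          push_neg at hcon
          have hrj : ∀ j, j ≠ i → r j = 0 := by
            intro j hji
            have h1 := hDr j
            have h2' : (μ j - (d:ℝ)) * r j = 0 := by ring_nf; linarith [h1]
            rcases mul_eq_zero.mp h2' with h | h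
            · exact absurd (by linarith : μ j = (d:ℝ)) (hcon j hji)
            · exact h
          have hxv0 : x' ⬝ᵥ v = p i * r i := by
            conv_lhs => rw [← hUr]
            rw [Matrix.dotProduct_mulVec, hvecmul x']
            rw [dotProduct]
            exact Finset.sum_eq_single i (fun j _ hji => by rw [hrj j hji, mul_zero])
              (fun h => absurd (Finset.mem_univ i) h)
          have hri : r i = 0 := by
            rcases mul_eq_zero.mp (hx'v ▸ hxv0).symm with h | h
            · exact absurd h hp
            · exact h
          have hr0 : r = 0 := by
            funext j
            by_cases hji : j = i
            · rw [hji]; exact hri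
            · exact hrj j hji
          have hv0 : v = 0 := by rw [← hUr, hr0, Matrix.mulVec_zero]
          have : (1:ℝ) = 0 := congrFun hv0 ⟨0, hn⟩
          norm_num at this
        obtain ⟨j, hji, hjd⟩ := hj
        rw [hμi]
        have hpair : ({i, j} : Finset (Fin n)).val = i ::ₘ ({j} : Finset (Fin n)).val :=
          Finset.insert_val_of_notMem (by simp [Ne.symm hji])
        have hcnt : Multiset.count ((d:ℝ)) (({i, j} : Finset (Fin n)).val.map μ) = 2 := by
          rw [hpair]
          simp [Multiset.count_cons, hμi, hjd]
        have hle : 2 ≤ Multiset.count ((d:ℝ)) (Finset.univ.val.map μ) := by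
          rw [← hcnt]
          exact Multiset.count_le_of_le _ (Multiset.map_le_map
            (Finset.val_le_iff.mpr (Finset.subset_univ _)))
        rw [← Multiset.count_pos, Multiset.count_erase_self]
        omega
      · exact (Multiset.mem_erase_of_ne hμi).2 hmem
    rw [abs_mul, abs_mul]
    exact mul_le_mul_of_nonneg_right habs (by positivity)
  -- assembly
  have habsum : ∀ z : Fin n → ℝ, (∑ i, |z i|^2) = z ⬝ᵥ z := by
    intro z
    simp [dotProduct, sq_abs, sq]
  have hpp : p ⬝ᵥ p ≤ b * n := by
    rw [hpdef, hnorm x', hx'x']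
    nlinarith [sq_nonneg b, hn'.le]
  have hqq : q ⬝ᵥ q ≤ c * n := by
    rw [hqdef, hnorm y', hy'y']
    nlinarith [sq_nonneg c, hn'.le]
  have hsqrt : Real.sqrt (b * n) * Real.sqrt (c * n) = n * Real.sqrt (b * c) := by
    rw [← Real.sqrt_mul (by positivity)]
    rw [show b * n * (c * n) = (b * c) * n^2 by ring,
      Real.sqrt_mul (by positivity), Real.sqrt_sq hn'.le]
    ring
  rw [hcard, ← key, h2]
  calc |∑ i, μ i * (p i * q i)| ≤ ∑ i, |μ i * (p i * q i)| :=
        Finset.abs_sum_le_sum_abs _ _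
    _ ≤ ∑ i, secondEigenvalue G d * (|p i| * |q i|) :=
        Finset.sum_le_sum fun i _ => hcoef i
    _ = secondEigenvalue G d * ∑ i, |p i| * |q i| := by rw [← Finset.mul_sum]
    _ ≤ secondEigenvalue G d * (Real.sqrt (∑ i, |p i|^2) * Real.sqrt (∑ i, |q i|^2)) :=
        mul_le_mul_of_nonneg_left (Real.sum_mul_le_sqrt_mul_sqrt _ _ _) hsec0
    _ = secondEigenvalue G d * (Real.sqrt (p ⬝ᵥ p) * Real.sqrt (q ⬝ᵥ q)) := by
        rw [habsum p, habsum q]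
    _ ≤ secondEigenvalue G d * (Real.sqrt (b * n) * Real.sqrt (c * n)) := by
        gcongr
    _ = secondEigenvalue G d * n * Real.sqrt (b * c) := by rw [hsqrt]; ring
end

section
/- Let G be a d-regular simple graph on n vertices, let 0 < p ≤ 1, and let G_p be the random subgraph with edge probability p. For 1 ≤ k ≤ n let T_k be the number of vertices of G_p contained in connected components that are trees with exactly k vertices, and let t_k be the number of k-vertex subtrees of G. Then E[T_k] ≥ k · t_k · p^{k-1} · (1−p)^{kd + k²}. -/
open MeasureTheory Filter

variable {n : ℕ} {p : ℝ}

noncomputable def bw (p : ℝ) (b : Bool) : ℝ := if b then p else 1 - p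

lemma bern_singleton (hp0 : 0 ≤ p) (hp1 : p ≤ 1) (b : Bool) :
    bernoulliMeasure p {b} = ENNReal.ofReal (bw p b) := by
  cases b <;> simp [bernoulliMeasure, bw, Measure.dirac_apply', hp0, hp1]

lemma bern_univ (hp0 : 0 ≤ p) (hp1 : p ≤ 1) :
    bernoulliMeasure p Set.univ = 1 := by
  simp [bernoulliMeasure]
  rw [← ENNReal.ofReal_add hp0 (by linarith)]
  norm_num

instance : IsFiniteMeasure (bernoulliMeasure p) := by
  constructor
  simp [bernoulliMeasure]

lemma perc_prob (hp0 : 0 ≤ p) (hp1 : p ≤ 1) :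
    IsProbabilityMeasure (percolationMeasure n p) where
  measure_univ := by
    rw [percolationMeasure, Measure.pi_univ]
    simp only [Finset.prod_const]
    rw [bern_univ hp0 hp1, one_pow]

lemma perc_singleton (hp0 : 0 ≤ p) (hp1 : p ≤ 1) (ω : Sym2 (Fin n) → Bool) :
    (percolationMeasure n p {ω}).toReal = ∏ e, bw p (ω e) := by
  have h1 : ({ω} : Set (Sym2 (Fin n) → Bool)) = Set.pi Set.univ (fun e => {ω e}) := by
    ext ρ; simp [funext_iff, Set.mem_pi]
  rw [h1, percolationMeasure, Measure.pi_pi]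
  rw [ENNReal.toReal_prod]
  refine Finset.prod_congr rfl fun e _ => ?_
  rw [bern_singleton hp0 hp1, ENNReal.toReal_ofReal]
  cases ω e <;> simp [bw] <;> linarith

attribute [local instance] Classical.propDecidable


lemma cylinder_sum' (hp0 : 0 ≤ p) (hp1 : p ≤ 1) (A B : Finset (Sym2 (Fin n)))
    (hAB : Disjoint A B) :
    ∑ ω ∈ Finset.univ.filter (fun ω : Sym2 (Fin n) → Bool =>
        (∀ e ∈ A, ω e = true) ∧ (∀ e ∈ B, ω e = false)),
      ∏ e, bw p (ω e)
    = p ^ A.card * (1 - p) ^ B.card := by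
  set S : Sym2 (Fin n) → Finset Bool :=
    fun e => if e ∈ A then {true} else if e ∈ B then {false} else Finset.univ with hS
  have hset : Finset.univ.filter (fun ω : Sym2 (Fin n) → Bool =>
      (∀ e ∈ A, ω e = true) ∧ (∀ e ∈ B, ω e = false)) = Fintype.piFinset S := by
    ext ω
    simp only [Finset.mem_filter, Finset.mem_univ, true_and, Fintype.mem_piFinset, hS]
    constructor
    · rintro ⟨h1, h2⟩ e
      split_ifs with hA hB
      · simp [h1 e hA]
      · simp [h2 e hB]
      · simp
    · intro h
      constructor <;> intro e he
      · have := h e; rw [if_pos he] at this; simpa using this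
      · have := h e
        rw [if_neg (fun hA => Finset.disjoint_left.1 hAB hA he), if_pos he] at this
        simpa using this
  have hprod : ∀ e : Sym2 (Fin n), (∑ b ∈ S e, bw p b) =
      if e ∈ A then p else if e ∈ B then (1 - p) else 1 := by
    intro e; simp only [hS]; split_ifs <;> simp [bw] <;> ring
  rw [hset, ← Finset.prod_univ_sum]
  simp only [hprod]
  rw [← Finset.prod_sdiff (Finset.subset_univ A)]
  have h1 : ∏ e ∈ A, (if e ∈ A then p else if e ∈ B then (1-p) else 1) = p ^ A.card := by
    rw [Finset.prod_congr rfl (fun e he => if_pos he), Finset.prod_const]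
  have hBsub : B ⊆ Finset.univ \ A := fun e he =>
    Finset.mem_sdiff.2 ⟨Finset.mem_univ _, fun hA => Finset.disjoint_left.1 hAB hA he⟩
  rw [h1, ← Finset.prod_sdiff hBsub]
  have h2 : ∏ e ∈ B, (if e ∈ A then p else if e ∈ B then (1-p) else 1) = (1-p) ^ B.card := by
    rw [Finset.prod_congr rfl
      (fun e he => by rw [if_neg (fun hA => Finset.disjoint_left.1 hAB hA he), if_pos he]),
      Finset.prod_const]
  have h3 : ∏ e ∈ (Finset.univ \ A) \ B, (if e ∈ A then p else if e ∈ B then (1-p) else 1) = 1 := by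
    refine Finset.prod_eq_one fun e he => ?_
    simp only [Finset.mem_sdiff] at he
    rw [if_neg he.1.2, if_neg he.2]
  rw [h2, h3, one_mul]; ring


variable {n : ℕ} {G : SimpleGraph (Fin n)} {ω : Sym2 (Fin n) → Bool}

lemma subgraph_finite : Finite G.Subgraph := by
  refine Finite.of_injective (fun T => (T.verts, T.Adj)) ?_
  intro T1 T2 h
  rw [Prod.mk.injEq] at h
  exact SimpleGraph.Subgraph.ext h.1 h.2

/-- tree edges of a subgraph, as a finset -/
noncomputable def treeEdges (T : G.Subgraph) : Finset (Sym2 (Fin n)) :=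
  Set.toFinset T.edgeSet

/-- edges of `G` incident to `T.verts`, but not edges of `T` -/
noncomputable def bdryEdges (T : G.Subgraph) : Finset (Sym2 (Fin n)) :=
  Finset.univ.filter (fun e => e ∈ G.edgeSet ∧ (∃ v ∈ T.verts, v ∈ e) ∧ e ∉ T.edgeSet)

def good (T : G.Subgraph) (ω : Sym2 (Fin n) → Bool) : Prop :=
  (∀ e ∈ treeEdges T, ω e = true) ∧ (∀ e ∈ bdryEdges T, ω e = false)

lemma treeEdges_disjoint_bdryEdges (T : G.Subgraph) : Disjoint (treeEdges T) (bdryEdges T) := by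
  rw [Finset.disjoint_left]
  intro e he hb
  simp only [treeEdges, Set.mem_toFinset] at he
  simp only [bdryEdges, Finset.mem_filter] at hb
  exact hb.2.2.2 he

lemma adj_of_percAdj {T : G.Subgraph} (hg : good T ω) {u v : Fin n}
    (hu : u ∈ T.verts) (h : (percolatedGraph G ω).Adj u v) : T.Adj u v := by
  by_contra hT
  have he : s(u, v) ∈ bdryEdges T := by
    simp only [bdryEdges, Finset.mem_filter, Finset.mem_univ, true_and]
    refine ⟨h.1, ⟨u, hu, by simp⟩, ?_⟩
    rw [SimpleGraph.Subgraph.mem_edgeSet]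
    exact hT
  have h2 : ω s(u, v) = true := h.2
  rw [hg.2 _ he] at h2
  exact Bool.false_ne_true h2

lemma percAdj_of_adj {T : G.Subgraph} (hg : good T ω) {u v : Fin n}
    (h : T.Adj u v) : (percolatedGraph G ω).Adj u v := by
  refine ⟨T.adj_sub h, hg.1 _ ?_⟩
  simp only [treeEdges, Set.mem_toFinset, SimpleGraph.Subgraph.mem_edgeSet]
  exact h

lemma verts_closed {T : G.Subgraph} (hg : good T ω) {u v : Fin n}
    (h : (percolatedGraph G ω).Reachable u v) (hv : v ∈ T.verts) : u ∈ T.verts := by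
  have key : ∀ (a b : Fin n) (_ : (percolatedGraph G ω).Walk a b), a ∈ T.verts → b ∈ T.verts := by
    intro a b w
    induction w with
    | nil => exact id
    | cons h' w' ih => exact fun ha => ih ((adj_of_percAdj hg ha h').snd_mem)
  obtain ⟨w⟩ := h.symm
  exact key _ _ w hv

lemma reachable_of_verts {T : G.Subgraph} (hg : good T ω) (ht : T.coe.IsTree)
    {u v : Fin n} (hu : u ∈ T.verts) (hv : v ∈ T.verts) :
    (percolatedGraph G ω).Reachable u v := by
  let f : T.coe →g (percolatedGraph G ω) :=
    ⟨Subtype.val, fun {a b} hab => percAdj_of_adj hg hab⟩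
  exact (ht.isConnected.preconnected ⟨u, hu⟩ ⟨v, hv⟩).map f

lemma supp_eq {T : G.Subgraph} (hg : good T ω) (ht : T.coe.IsTree) {v : Fin n}
    (hv : v ∈ T.verts) :
    ((percolatedGraph G ω).connectedComponentMk v).supp = T.verts := by
  ext u
  rw [SimpleGraph.ConnectedComponent.mem_supp_iff, SimpleGraph.ConnectedComponent.eq]
  exact ⟨fun h => verts_closed hg h hv, fun hu => reachable_of_verts hg ht hu hv⟩

lemma induce_eq {T : G.Subgraph} (hg : good T ω) :
    (percolatedGraph G ω).induce T.verts = T.coe := by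
  ext ⟨a, ha⟩ ⟨b, hb⟩
  simp only [SimpleGraph.comap_adj, Function.Embedding.coe_subtype,
    SimpleGraph.Subgraph.coe_adj]
  exact ⟨fun h => adj_of_percAdj hg ha h, fun h => percAdj_of_adj hg h⟩

lemma good_unique {T1 T2 : G.Subgraph} (h1 : good T1 ω) (h2 : good T2 ω)
    (ht1 : T1.coe.IsTree) (ht2 : T2.coe.IsTree) {v : Fin n}
    (hv1 : v ∈ T1.verts) (hv2 : v ∈ T2.verts) : T1 = T2 := by
  have hverts : T1.verts = T2.verts := by
    rw [← supp_eq h1 ht1 hv1, ← supp_eq h2 ht2 hv2]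
  refine SimpleGraph.Subgraph.ext hverts ?_
  ext a b
  constructor
  · intro h
    exact adj_of_percAdj h2 (hverts ▸ h.fst_mem) (percAdj_of_adj h1 h)
  · intro h
    exact adj_of_percAdj h1 (hverts ▸ h.fst_mem) (percAdj_of_adj h2 h)

lemma treeEdges_card {T : G.Subgraph} (ht : T.coe.IsTree) {k : ℕ}
    (hk : Nat.card T.verts = k) : (treeEdges T).card = k - 1 := by
  have h1 : (treeEdges T).card = T.edgeSet.ncard := (Set.ncard_eq_toFinset_card' _).symm
  have h2 : T.edgeSet.ncard = T.coe.edgeSet.ncard := by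
    rw [← SimpleGraph.Subgraph.image_coe_edgeSet_coe,
      Set.ncard_image_of_injective _ (Sym2.map.injective Subtype.val_injective)]
  haveI : Fintype ↥T.verts := Fintype.ofFinite _
  haveI : Fintype ↥T.coe.edgeSet := Fintype.ofFinite _
  have h3 := ht.card_edgeFinset
  rw [SimpleGraph.edgeFinset] at h3
  have h4 : T.coe.edgeSet.ncard = Fintype.card ↥T.verts - 1 := by
    rw [Set.ncard_eq_toFinset_card' ]
    omega
  rw [h1, h2, h4, ← Nat.card_eq_fintype_card, hk]

lemma bdryEdges_card {d k : ℕ} (hreg : regularOfDegree G d) {T : G.Subgraph}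
    (hk : Nat.card T.verts = k) : (bdryEdges T).card ≤ k * d := by
  haveI : Fintype ↥T.verts := Fintype.ofFinite _
  have hsub : bdryEdges T ⊆ T.verts.toFinset.biUnion (fun v => G.incidenceFinset v) := by
    intro e he
    simp only [bdryEdges, Finset.mem_filter] at he
    obtain ⟨-, hG, ⟨v, hv, hve⟩, -⟩ := he
    refine Finset.mem_biUnion.2 ⟨v, Set.mem_toFinset.2 hv, ?_⟩
    rw [SimpleGraph.mem_incidenceFinset]
    exact ⟨hG, hve⟩
  calc (bdryEdges T).card ≤ _ := Finset.card_le_card hsub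
    _ ≤ ∑ v ∈ T.verts.toFinset, (G.incidenceFinset v).card := Finset.card_biUnion_le
    _ = ∑ _v ∈ T.verts.toFinset, d := by
        refine Finset.sum_congr rfl fun v _ => ?_
        rw [SimpleGraph.card_incidenceFinset_eq_degree, ← hreg v, SimpleGraph.degree,
          SimpleGraph.neighborFinset, Set.toFinset_card, Nat.card_eq_fintype_card]
    _ = k * d := by
        rw [Finset.sum_const, Set.toFinset_card, ← Nat.card_eq_fintype_card, hk, smul_eq_mul]

noncomputable local instance instSubFin : Fintype G.Subgraph :=
  @Fintype.ofFinite _ subgraph_finite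

lemma pointwise (k : ℕ) (ω : Sym2 (Fin n) → Bool) :
    k * (Finset.univ.filter (fun T : G.Subgraph =>
        T.coe.IsTree ∧ Nat.card T.verts = k ∧ good T ω)).card
      ≤ verticesInTreeComponentsOfSize (percolatedGraph G ω) k := by
  set H := percolatedGraph G ω with hH
  set F := Finset.univ.filter (fun T : G.Subgraph =>
    T.coe.IsTree ∧ Nat.card T.verts = k ∧ good T ω) with hF
  have hmem : ∀ T ∈ F, T.coe.IsTree ∧ Nat.card T.verts = k ∧ good T ω := by
    intro T hT
    simpa [hF] using hT
  have hdisj : ∀ T1 ∈ F, ∀ T2 ∈ F, T1 ≠ T2 →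
      Disjoint (T1.verts.toFinset) (T2.verts.toFinset) := by
    intro T1 h1 T2 h2 hne
    obtain ⟨ht1, _, hg1⟩ := hmem _ h1
    obtain ⟨ht2, _, hg2⟩ := hmem _ h2
    rw [Finset.disjoint_left]
    intro v hv1 hv2
    exact hne (good_unique hg1 hg2 ht1 ht2 (Set.mem_toFinset.1 hv1) (Set.mem_toFinset.1 hv2))
  have hcard : (F.biUnion (fun T => T.verts.toFinset)).card = k * F.card := by
    rw [Finset.card_biUnion hdisj,
      Finset.sum_congr rfl (fun T hT => show T.verts.toFinset.card = k by
        rw [Set.toFinset_card, ← Nat.card_eq_fintype_card]; exact (hmem _ hT).2.1),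
      Finset.sum_const, smul_eq_mul, mul_comm]
  have hsub : F.biUnion (fun T => T.verts.toFinset) ⊆ Finset.univ.filter (fun v =>
      componentOrder H (H.connectedComponentMk v) = k ∧
      componentIsTree H (H.connectedComponentMk v)) := by
    intro v hv
    obtain ⟨T, hT, hvT⟩ := Finset.mem_biUnion.1 hv
    obtain ⟨htree, hcardT, hg⟩ := hmem _ hT
    rw [Set.mem_toFinset] at hvT
    have hsupp := supp_eq hg htree hvT
    refine Finset.mem_filter.2 ⟨Finset.mem_univ _, ?_, ?_⟩
    · rw [componentOrder, hsupp, hcardT]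
    · rw [componentIsTree, hsupp, induce_eq hg]
      exact htree
  have hvt : verticesInTreeComponentsOfSize H k = (Finset.univ.filter (fun v =>
      componentOrder H (H.connectedComponentMk v) = k ∧
      componentIsTree H (H.connectedComponentMk v))).card := by
    rw [verticesInTreeComponentsOfSize, Nat.card_coe_set_eq, Set.ncard_eq_toFinset_card',
      Set.toFinset_setOf]
  rw [hvt, ← hcard]
  exact Finset.card_le_card hsub

theorem stmt12 {n : ℕ} (G : SimpleGraph (Fin n)) (d : ℕ) (hreg : regularOfDegree G d)
    (p : ℝ) (hp0 : 0 < p) (hp1 : p ≤ 1) (k : ℕ) (hk1 : 1 ≤ k) (hkn : k ≤ n) :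
    (k : ℝ) * (subtreeCount G k : ℝ) * p ^ (k - 1) * (1 - p) ^ (k * d + k ^ 2) ≤
      ∫ ω, (verticesInTreeComponentsOfSize (percolatedGraph G ω) k : ℝ)
        ∂(percolationMeasure n p) := by
  haveI := perc_prob (n := n) hp0.le hp1
  set 𝒯 : Finset G.Subgraph := Finset.univ.filter
    (fun T => T.coe.IsTree ∧ Nat.card T.verts = k) with hT
  have hsc : (subtreeCount G k : ℝ) = 𝒯.card := by
    rw [subtreeCount, Nat.card_eq_fintype_card, Fintype.card_subtype]
  rw [integral_fintype .of_finite]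
  have hw : ∀ ω : Sym2 (Fin n) → Bool,
      ((percolationMeasure n p) {ω}).toReal = ∏ e, bw p (ω e) :=
    perc_singleton hp0.le hp1
  have hwnn : ∀ ω : Sym2 (Fin n) → Bool, 0 ≤ ∏ e, bw p (ω e) := fun ω =>
    Finset.prod_nonneg fun e _ => by cases ω e <;> simp [bw] <;> linarith
  have key : ∀ T ∈ 𝒯, p ^ (k - 1) * (1 - p) ^ (k * d + k ^ 2) ≤
      ∑ ω ∈ Finset.univ.filter (fun ω => good T ω), ∏ e, bw p (ω e) := by
    intro T hT'
    obtain ⟨htree, hcardT⟩ : T.coe.IsTree ∧ Nat.card T.verts = k := by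
      simpa [hT] using hT'
    have hcyl := cylinder_sum' (p := p) hp0.le hp1 (treeEdges T) (bdryEdges T)
      (treeEdges_disjoint_bdryEdges T)
    have heq : Finset.univ.filter (fun ω => good T ω) =
        Finset.univ.filter (fun ω : Sym2 (Fin n) → Bool =>
          (∀ e ∈ treeEdges T, ω e = true) ∧ (∀ e ∈ bdryEdges T, ω e = false)) := by
      apply Finset.filter_congr
      intro ω _
      exact Iff.rfl
    rw [heq, hcyl, treeEdges_card htree hcardT]
    have hb : (bdryEdges T).card ≤ k * d + k ^ 2 :=
      le_trans (bdryEdges_card hreg hcardT) (Nat.le_add_right _ _)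
    have h1p0 : (0:ℝ) ≤ 1 - p := by linarith
    have h1p1 : (1:ℝ) - p ≤ 1 := by linarith
    exact mul_le_mul_of_nonneg_left (pow_le_pow_of_le_one h1p0 h1p1 hb)
      (pow_nonneg hp0.le _)
  have hcω : ∀ ω : Sym2 (Fin n) → Bool,
      (((𝒯.filter (fun T => good T ω)).card : ℕ) : ℝ) =
        ∑ T ∈ 𝒯, if good T ω then (1:ℝ) else 0 := by
    intro ω
    rw [Finset.card_filter, Nat.cast_sum]
    simp
  calc (k : ℝ) * (subtreeCount G k : ℝ) * p ^ (k - 1) * (1 - p) ^ (k * d + k ^ 2)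
      = ∑ T ∈ 𝒯, (k : ℝ) * (p ^ (k - 1) * (1 - p) ^ (k * d + k ^ 2)) := by
        rw [Finset.sum_const, hsc]; ring
    _ ≤ ∑ T ∈ 𝒯, (k : ℝ) * ∑ ω ∈ Finset.univ.filter (fun ω => good T ω),
          ∏ e, bw p (ω e) := by
        refine Finset.sum_le_sum fun T hT' => ?_
        exact mul_le_mul_of_nonneg_left (key T hT') (Nat.cast_nonneg k)
    _ = ∑ T ∈ 𝒯, ∑ ω : Sym2 (Fin n) → Bool,
          (if good T ω then (∏ e, bw p (ω e)) * k else 0) := by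
        refine Finset.sum_congr rfl fun T _ => ?_
        rw [← Finset.sum_filter, Finset.mul_sum]
        exact Finset.sum_congr rfl fun ω _ => by ring
    _ = ∑ ω : Sym2 (Fin n) → Bool, ∑ T ∈ 𝒯,
          (if good T ω then (∏ e, bw p (ω e)) * k else 0) := Finset.sum_comm
    _ = ∑ ω : Sym2 (Fin n) → Bool,
          (∏ e, bw p (ω e)) * (k * ((𝒯.filter (fun T => good T ω)).card : ℝ)) := by
        refine Finset.sum_congr rfl fun ω _ => ?_
        rw [hcω, Finset.mul_sum]
        rw [Finset.mul_sum]
        refine Finset.sum_congr rfl fun T _ => ?_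
        split_ifs <;> ring
    _ ≤ ∑ ω : Sym2 (Fin n) → Bool,
          (∏ e, bw p (ω e)) * (verticesInTreeComponentsOfSize (percolatedGraph G ω) k : ℝ) := by
        refine Finset.sum_le_sum fun ω _ => ?_
        refine mul_le_mul_of_nonneg_left ?_ (hwnn ω)
        have hpt := pointwise (G := G) k ω
        have h2 : (𝒯.filter fun T => good T ω) = Finset.univ.filter
            (fun T : G.Subgraph => T.coe.IsTree ∧ Nat.card T.verts = k ∧ good T ω) := by
          rw [hT, Finset.filter_filter]
          apply Finset.filter_congr
          intro T _
          tauto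
        rw [h2]
        exact_mod_cast hpt
    _ = ∑ ω : Sym2 (Fin n) → Bool, ((percolationMeasure n p) {ω}).toReal •
          (verticesInTreeComponentsOfSize (percolatedGraph G ω) k : ℝ) := by
        refine Finset.sum_congr rfl fun ω _ => ?_
        rw [hw ω, smul_eq_mul]
end

section
/- Define f(α) = Σ_{k=1}^∞ (k^{k-1}/k!) α^{k-1} e^{−αk} for α > 0. Then f(α) = 1 for 0 < α ≤ 1, and f(α) = ᾱ/α for α > 1, where ᾱ ∈ (0,1) is the unique solution other than α of x e^{-x} = α e^{-α}. Equivalently, for every x with 0 < x ≤ 1, Σ_{k=1}^∞ (k^{k-1}/k!) (x e^{-x})^k = x. -/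
open Filter
open Finset Set
open scoped NNReal ENNReal

theorem findiff : ∀ m n : ℕ, m < n →
    ∑ k ∈ range (n + 1), (-1 : ℝ) ^ k * (n.choose k) * (k : ℝ) ^ m = 0 := by
  intro m
  induction m using Nat.strong_induction_on with
  | _ m ih =>
    intro n hmn
    match m with
    | 0 =>
      have h := Int.alternating_sum_range_choose_of_ne (n := n) (by omega)
      have : ((∑ i ∈ range (n + 1), (-1 : ℤ) ^ i * (n.choose i) : ℤ) : ℝ) = 0 := by
        rw [h]; norm_num
      push_cast at this
      simpa using this
    | m + 1 =>
      have hn1 : n - 1 + 1 = n := by omega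
      rw [Finset.sum_range_succ']
      have step : ∀ i, (-1 : ℝ) ^ (i + 1) * (n.choose (i + 1)) * ((i + 1 : ℕ) : ℝ) ^ (m + 1)
          = (-(n : ℝ)) * ∑ t ∈ range (m + 1),
              (m.choose t) * ((-1 : ℝ) ^ i * ((n-1).choose i) * (i : ℝ) ^ t) := by
        intro i
        have hc : ((n.choose (i+1)) * (i+1) : ℕ) = n * ((n-1).choose i) := by
          have := Nat.add_one_mul_choose_eq (n - 1) i
          simp only [Nat.succ_eq_add_one, hn1] at this
          omega
        have hcr : ((n.choose (i+1)) : ℝ) * ((i:ℝ)+1) = (n : ℝ) * ((n-1).choose i) := by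
          exact_mod_cast congrArg (fun t : ℕ => (t : ℝ)) hc
        have hbin : ((i : ℝ) + 1) ^ m = ∑ t ∈ range (m + 1), (m.choose t) * (i : ℝ) ^ t := by
          have := add_pow (i : ℝ) 1 m
          simpa [mul_comm] using this
        push_cast
        have e1 : (-1:ℝ)^(i+1) * (n.choose (i+1)) * ((i:ℝ)+1)^(m+1)
            = ((n.choose (i+1):ℝ) * ((i:ℝ)+1)) * ((-1:ℝ)^(i+1) * ((i:ℝ)+1)^m) := by
          rw [pow_succ]; ring
        rw [e1, hcr, hbin]
        simp only [Finset.mul_sum]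
        refine Finset.sum_congr rfl fun t _ => ?_
        rw [pow_succ]
        ring
      rw [Finset.sum_congr rfl fun i _ => step i]
      rw [← Finset.mul_sum, Finset.sum_comm]
      have inner : ∀ t ∈ range (m + 1),
          ∑ i ∈ range n, ((m.choose t : ℝ) * ((-1 : ℝ) ^ i * ((n-1).choose i) * (i : ℝ) ^ t)) = 0 := by
        intro t ht
        have htm : t < m + 1 := by simpa using ht
        rw [← Finset.mul_sum]
        have h0 : ∑ i ∈ range ((n-1) + 1), (-1 : ℝ) ^ i * (((n-1).choose i) : ℝ) * (i : ℝ) ^ t = 0 :=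
          ih t htm (n - 1) (by omega)
        rw [hn1] at h0
        rw [show (∑ i ∈ range n, (-1 : ℝ) ^ i * (((n-1).choose i) : ℝ) * (i : ℝ) ^ t) = 0 from h0]
        · ring
      rw [Finset.sum_congr rfl inner]
      simp


noncomputable def aa : ℕ → ℝ := fun k => if k = 0 then 0 else (k : ℝ) ^ (k - 1) / (Nat.factorial k)

lemma aa_nonneg (k : ℕ) : 0 ≤ aa k := by
  unfold aa
  split
  · exact le_rfl
  · positivity

lemma aa_le_exp (k : ℕ) : aa k ≤ Real.exp 1 ^ k := by
  unfold aa
  split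
  · positivity
  · rename_i hk
    have hk1 : 1 ≤ k := Nat.one_le_iff_ne_zero.mpr hk
    have h1 : (k : ℝ) ^ (k - 1) ≤ (k : ℝ) ^ k :=
      pow_le_pow_right₀ (by exact_mod_cast hk1) (Nat.sub_le k 1)
    have h2 : (k : ℝ) ^ k / (Nat.factorial k) ≤ Real.exp k := by
      have single : (k : ℝ) ^ k / (Nat.factorial k) ≤ ∑ i ∈ range (k + 1), (k : ℝ) ^ i / (Nat.factorial i) := by
        have := Finset.single_le_sum (f := fun i => (k : ℝ) ^ i / (Nat.factorial i))
          (fun i _ => by positivity) (Finset.self_mem_range_succ k)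
        simpa using this
      exact single.trans (Real.sum_le_exp_of_nonneg (by positivity) (k + 1))
    calc (k : ℝ) ^ (k-1) / (Nat.factorial k) ≤ (k : ℝ) ^ k / (Nat.factorial k) := by
          gcongr
      _ ≤ Real.exp k := h2
      _ = Real.exp 1 ^ k := by rw [← Real.exp_nat_mul]; ring_nf
lemma summable_aa_geom {t : ℝ} (ht : 0 ≤ t) (h : Real.exp 1 * t < 1) :
    Summable fun k => aa k * t ^ k := by
  apply Summable.of_nonneg_of_le (fun k => mul_nonneg (aa_nonneg k) (pow_nonneg ht k)) (fun k => ?_)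
    (summable_geometric_of_lt_one (mul_nonneg (Real.exp_pos 1).le ht) h)
  calc aa k * t ^ k ≤ Real.exp 1 ^ k * t ^ k := mul_le_mul_of_nonneg_right (aa_le_exp k) (pow_nonneg ht k)
    _ = (Real.exp 1 * t) ^ k := (mul_pow _ _ _).symm





lemma coeff_eq (x : ℝ) (n : ℕ) :
    (∑ kl ∈ Finset.HasAntidiagonal.antidiagonal n,
      aa kl.1 * x ^ kl.1 * ((-(kl.1 : ℝ) * x) ^ kl.2 / (Nat.factorial kl.2)))
    = if n = 1 then x else 0 := by
  rw [Finset.Nat.sum_antidiagonal_eq_sum_range_succ_mk]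
  match n with
  | 0 => simp [aa]
  | 1 =>
    rw [Finset.sum_range_succ, Finset.sum_range_succ, Finset.sum_range_zero]
    norm_num [aa]
  | (m + 2) =>
    set n := m + 2 with hn
    have hterm : ∀ k ∈ range (n + 1),
        aa k * x ^ k * ((-(k : ℝ) * x) ^ (n - k) / (Nat.factorial (n - k)))
        = (x ^ n * (-1 : ℝ) ^ n / (Nat.factorial n)) *
            ((-1 : ℝ) ^ k * (n.choose k) * (k : ℝ) ^ (n - 1)) := by
      intro k hk
      have hkn : k ≤ n := by simpa using Nat.lt_succ_iff.mp (mem_range.mp hk)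
      match k with
      | 0 => simp [aa]; right; omega
      | k + 1 =>
        set j := k + 1 with hj
        have hj1 : 1 ≤ j := by omega
        unfold aa
        rw [if_neg (by omega)]
        have e1 : (-(j : ℝ) * x) ^ (n - j) = (-1) ^ (n - j) * (j : ℝ) ^ (n - j) * x ^ (n - j) := by
          rw [show -(j:ℝ)*x = (-1) * ((j:ℝ) * x) by ring, mul_pow, mul_pow]; ring
        have R1 : (j : ℝ) ^ k * (j : ℝ) ^ (n - j) = (j : ℝ) * (j : ℝ) ^ m := by
          rw [← pow_add, show k + (n - j) = m + 1 by omega, pow_succ]; ring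
        have R2 : x ^ k * x ^ (n - j) * x = x ^ 2 * x ^ m := by
          rw [mul_assoc, mul_comm (x ^ (n-j)) x, ← pow_succ', ← pow_add, ← pow_add]
          congr 1; omega
        have R3 : ((n.choose j : ℝ)) * (Nat.factorial j) * (Nat.factorial (n - j))
            = (Nat.factorial n : ℝ) := by
          exact_mod_cast congrArg (fun t : ℕ => (t : ℝ))
            (Nat.choose_mul_factorial_mul_factorial hkn)
        have hk2 : (-1 : ℝ) ^ k * (-1 : ℝ) ^ k = 1 := by
          rw [← pow_add]; exact Even.neg_one_pow ⟨k, by ring⟩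
        have hA : (-1 : ℝ) ^ (n - j) * (-1 : ℝ) ^ k = -(-1 : ℝ) ^ m := by
          rw [← pow_add, show n - j + k = m + 1 by omega, pow_succ]; ring
        have R4 : (-1 : ℝ) ^ (n - j) = -((-1 : ℝ) ^ k * (-1 : ℝ) ^ m) := by
          linear_combination ((-1:ℝ)^k) * hA - ((-1:ℝ)^(n-j)) * hk2
        have hfj : (0:ℝ) < (Nat.factorial j : ℝ) := by exact_mod_cast Nat.factorial_pos j
        have hfnj : (0:ℝ) < (Nat.factorial (n-j) : ℝ) := by exact_mod_cast Nat.factorial_pos (n-j)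
        have hfn : (0:ℝ) < (Nat.factorial n : ℝ) := by exact_mod_cast Nat.factorial_pos n
        rw [e1, show j - 1 = k by omega, show n - 1 = m + 1 by omega]
        field_simp
        linear_combination ((j:ℝ)^k * (j:ℝ)^(n-j) * (x * x^k * x^(n-j)) * ((Nat.factorial n : ℝ))) * R4
          + (-((x * x^k * x^(n-j)) * (Nat.factorial n : ℝ) * (-1:ℝ)^k * (-1:ℝ)^m)) * R1
          + (-((Nat.factorial n : ℝ) * (-1:ℝ)^k * (-1:ℝ)^m * (j:ℝ) * (j:ℝ)^m)) * R2
          + ((x^2 * x^m * (-1:ℝ)^k * (-1:ℝ)^m * (j:ℝ) * (j:ℝ)^m)) * R3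
    rw [Finset.sum_congr rfl hterm, ← Finset.mul_sum, findiff (n-1) n (by omega), mul_zero,
      if_neg (by omega)]



lemma exp_quarter_bound : Real.exp 1 * ((1/4) * Real.exp (1/4)) < 1 := by
  have h4 : Real.exp (1/4) ^ (4:ℕ) = Real.exp 1 := by
    rw [← Real.exp_nat_mul]; norm_num
  have he : Real.exp 1 < 2.7182818286 := Real.exp_one_lt_d9
  have hq : Real.exp (1/4) < 4/3 := by
    by_contra hcon
    push_neg at hcon
    have := pow_le_pow_left₀ (by norm_num : (0:ℝ) ≤ 4/3) hcon 4
    rw [h4] at this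
    norm_num at this
    linarith
  nlinarith [Real.exp_pos (1/4), Real.exp_pos 1]

set_option maxHeartbeats 1000000 in
lemma key_small {x : ℝ} (hx0 : 0 < x) (hx4 : x ≤ 1/4) :
    ∑' k : ℕ, aa k * (x * Real.exp (-x)) ^ k = x := by
  set F : ℕ × ℕ → ℝ := fun p => aa p.1 * x ^ p.1 * ((-(p.1:ℝ) * x) ^ p.2 / (Nat.factorial p.2))
    with hF
  have hpow : ∀ (y : ℝ) (k : ℕ), (x * Real.exp y) ^ k = x ^ k * Real.exp ((k:ℝ) * y) := by
    intro y k
    rw [mul_pow, ← Real.exp_nat_mul]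
  have hslice : ∀ k : ℕ, HasSum (fun j => F (k, j)) (aa k * (x * Real.exp (-x)) ^ k) := by
    intro k
    have he : HasSum (fun j => (-(k:ℝ) * x) ^ j / (Nat.factorial j))
        (Real.exp (-(k:ℝ) * x)) := by
      have h1 := NormedSpace.expSeries_div_hasSum_exp (-(k:ℝ) * x)
      rwa [← Real.exp_eq_exp_ℝ] at h1
    have h2 := he.mul_left (aa k * x ^ k)
    rw [hpow (-x) k, show aa k * (x ^ k * Real.exp (↑k * -x)) = aa k * x ^ k * Real.exp (-(k:ℝ) * x) by ring_nf]
    exact h2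
  have habs : ∀ p : ℕ × ℕ, |F p| = aa p.1 * x ^ p.1 * (((p.1:ℝ) * x) ^ p.2 / (Nat.factorial p.2)) := by
    intro ⟨k, j⟩
    simp only [hF, abs_mul, abs_div, abs_pow, abs_neg, abs_mul]
    rw [abs_of_nonneg (aa_nonneg k), abs_of_nonneg hx0.le,
      abs_of_nonneg (by positivity : (0:ℝ) ≤ (k:ℕ)), abs_of_nonneg (by positivity : (0:ℝ) ≤ (Nat.factorial j : ℝ))]
  have hGslice : ∀ k : ℕ, HasSum (fun j => |F (k, j)|) (aa k * (x * Real.exp x) ^ k) := by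
    intro k
    have he : HasSum (fun j => ((k:ℝ) * x) ^ j / (Nat.factorial j)) (Real.exp ((k:ℝ) * x)) := by
      have h1 := NormedSpace.expSeries_div_hasSum_exp ((k:ℝ) * x)
      rwa [← Real.exp_eq_exp_ℝ] at h1
    have h2 := (he.mul_left (aa k * x ^ k))
    rw [show (fun j => |F (k, j)|) = fun j => aa k * x ^ k * (((k:ℝ) * x) ^ j / (Nat.factorial j))
      from funext fun j => habs (k, j)]
    rw [hpow x k, show aa k * (x ^ k * Real.exp (↑k * x)) = aa k * x ^ k * Real.exp ((k:ℝ) * x) by ring]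
    exact h2
  have hGsum : Summable (fun k => aa k * (x * Real.exp x) ^ k) := by
    apply summable_aa_geom (by positivity)
    have hmono : x * Real.exp x ≤ (1/4) * Real.exp (1/4) := by
      have := Real.exp_le_exp.mpr hx4
      nlinarith [Real.exp_pos x]
    nlinarith [exp_quarter_bound, Real.exp_pos 1]
  have hFabs : Summable (fun p : ℕ × ℕ => |F p|) := by
    rw [summable_prod_of_nonneg (fun p => abs_nonneg _)]
    refine ⟨fun k => (hGslice k).summable, ?_⟩
    apply hGsum.congr
    intro k
    exact (hGslice k).tsum_eq.symm
  have hFsummable : Summable F := hFabs.of_abs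
  calc ∑' k : ℕ, aa k * (x * Real.exp (-x)) ^ k
      = ∑' (k : ℕ) (j : ℕ), F (k, j) := tsum_congr fun k => (hslice k).tsum_eq.symm
    _ = ∑' p : ℕ × ℕ, F p := (Summable.tsum_prod' hFsummable fun k => (hslice k).summable).symm
    _ = ∑' n : ℕ, ∑ kl ∈ Finset.HasAntidiagonal.antidiagonal n, F kl := by
        have hsig : Summable (fun c : (Σ n : ℕ, {p // p ∈ Finset.HasAntidiagonal.antidiagonal n}) =>
            F (Finset.HasAntidiagonal.sigmaAntidiagonalEquivProd c)) :=
          (Finset.HasAntidiagonal.sigmaAntidiagonalEquivProd).summable_iff.mpr hFsummable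
        rw [← Finset.HasAntidiagonal.sigmaAntidiagonalEquivProd.tsum_eq F]
        rw [Summable.tsum_sigma' (fun n => (hasSum_fintype _).summable) hsig]
        refine tsum_congr fun n => ?_
        rw [tsum_fintype]
        exact Finset.sum_finset_coe (fun kl => F kl) (Finset.HasAntidiagonal.antidiagonal n)
    _ = ∑' n : ℕ, if n = 1 then x else 0 := tsum_congr fun n => coeff_eq x n
    _ = x := by
        rw [tsum_eq_single 1 (fun n hn => if_neg hn)]
        simp



noncomputable def pp : FormalMultilinearSeries ℝ ℝ ℝ := FormalMultilinearSeries.ofScalars ℝ aa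

lemma pp_radius : ENNReal.ofReal (Real.exp (-1)) ≤ pp.radius := by
  have hr : ENNReal.ofReal (Real.exp (-1)) = ((Real.toNNReal (Real.exp (-1))) : ℝ≥0∞) := rfl
  rw [hr]
  apply pp.le_radius_of_bound 1
  intro n
  have hn : ‖pp n‖ = aa n := by
    rw [pp, FormalMultilinearSeries.ofScalars_norm]
    exact abs_of_nonneg (aa_nonneg n)
  rw [hn, Real.coe_toNNReal _ (Real.exp_pos _).le]
  calc aa n * Real.exp (-1) ^ n ≤ Real.exp 1 ^ n * Real.exp (-1) ^ n := by
        have := aa_le_exp n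
        have h2 : (0:ℝ) ≤ Real.exp (-1) ^ n := by positivity
        nlinarith
    _ = 1 := by
        rw [← mul_pow, ← Real.exp_add]
        norm_num

lemma T_eq : pp.sum = fun t : ℝ => ∑' k : ℕ, aa k * t ^ k := by
  funext t
  have : pp.sum t = FormalMultilinearSeries.ofScalarsSum aa t := rfl
  rw [this, FormalMultilinearSeries.ofScalars_sum_eq]
  simp [smul_eq_mul]

lemma T_analyticAt {t : ℝ} (ht : |t| < Real.exp (-1)) :
    AnalyticAt ℝ (fun t : ℝ => ∑' k : ℕ, aa k * t ^ k) t := by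
  rw [← T_eq]
  have hpos : 0 < pp.radius :=
    lt_of_lt_of_le (by simp [Real.exp_pos]) pp_radius
  apply (pp.hasFPowerSeriesOnBall hpos).analyticAt_of_mem
  rw [EMetric.mem_ball, edist_dist, Real.dist_eq, sub_zero]
  exact lt_of_lt_of_le ((ENNReal.ofReal_lt_ofReal_iff (Real.exp_pos _)).mpr ht) pp_radius

lemma phi_deriv (y : ℝ) :
    HasDerivAt (fun y : ℝ => y * Real.exp (-y)) ((1 - y) * Real.exp (-y)) y := by
  have h1 : HasDerivAt (fun y : ℝ => Real.exp (-y)) (-Real.exp (-y)) y := by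
    simpa using (hasDerivAt_neg y).exp
  have h2 := (hasDerivAt_id y).mul h1
  have e : (1 - y) * Real.exp (-y) = 1 * Real.exp (-y) + id y * -Real.exp (-y) := by
    simp only [id]; ring
  rw [e]
  exact h2

lemma phi_mono : StrictMonoOn (fun y : ℝ => y * Real.exp (-y)) (Set.Icc 0 1) := by
  apply strictMonoOn_of_deriv_pos (convex_Icc 0 1)
  · exact (continuous_id.mul (Real.continuous_exp.comp continuous_neg)).continuousOn
  · intro y hy
    rw [interior_Icc] at hy
    rw [(phi_deriv y).deriv]
    have h1 : 0 < 1 - y := by linarith [hy.2]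
    positivity

lemma phi_lt {y : ℝ} (h0 : 0 ≤ y) (h1 : y < 1) : y * Real.exp (-y) < Real.exp (-1) := by
  have := phi_mono (Set.mem_Icc.mpr ⟨h0, h1.le⟩)
    (Set.mem_Icc.mpr ⟨zero_le_one, le_rfl⟩) h1
  simpa using this

lemma key_mid {x : ℝ} (hx : x ∈ Set.Ioo (0:ℝ) 1) :
    ∑' k : ℕ, aa k * (x * Real.exp (-x)) ^ k = x := by
  have hT : AnalyticOnNhd ℝ (fun x : ℝ => ∑' k : ℕ, aa k * (x * Real.exp (-x)) ^ k)
      (Set.Ioo 0 1) := by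
    intro y hy
    have hφ : AnalyticAt ℝ (fun x : ℝ => x * Real.exp (-x)) y :=
      analyticAt_id.mul (analyticAt_rexp.comp analyticAt_id.neg)
    have habs : |y * Real.exp (-y)| < Real.exp (-1) := by
      rw [abs_of_nonneg (mul_nonneg hy.1.le (Real.exp_pos _).le)]
      exact phi_lt hy.1.le hy.2
    exact AnalyticAt.comp (g := fun t : ℝ => ∑' k : ℕ, aa k * t ^ k)
      (f := fun x : ℝ => x * Real.exp (-x)) (T_analyticAt habs) hφ
  have hid : AnalyticOnNhd ℝ (fun x : ℝ => x) (Set.Ioo 0 1) := fun y _ => analyticAt_id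
  have hev : (fun x : ℝ => ∑' k : ℕ, aa k * (x * Real.exp (-x)) ^ k) =ᶠ[nhds (1/8 : ℝ)]
      (fun x : ℝ => x) := by
    filter_upwards [Ioo_mem_nhds (by norm_num : (0:ℝ) < 1/8) (by norm_num : (1/8:ℝ) < 1/4)]
      with y hy
    exact key_small hy.1 hy.2.le
  exact hT.eqOn_of_preconnected_of_eventuallyEq hid isPreconnected_Ioo
    (by norm_num : (1/8 : ℝ) ∈ Set.Ioo (0:ℝ) 1) hev hx



lemma exp_mul_phi_lt_one {y : ℝ} (h0 : 0 ≤ y) (h1 : y < 1) :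
    Real.exp 1 * (y * Real.exp (-y)) < 1 := by
  have h := phi_lt h0 h1
  have h2 : Real.exp 1 * (y * Real.exp (-y)) < Real.exp 1 * Real.exp (-1) := by
    have := Real.exp_pos 1
    nlinarith
  rwa [← Real.exp_add, add_neg_cancel, Real.exp_zero] at h2

lemma summable_phi {y : ℝ} (h0 : 0 ≤ y) (h1 : y < 1) :
    Summable fun k => aa k * (y * Real.exp (-y)) ^ k :=
  summable_aa_geom (mul_nonneg h0 (Real.exp_pos _).le) (exp_mul_phi_lt_one h0 h1)

lemma sum_range_le_one (N : ℕ) : ∑ k ∈ range N, aa k * Real.exp (-1) ^ k ≤ 1 := by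
  have hcont : Continuous (fun x : ℝ => ∑ k ∈ range N, aa k * (x * Real.exp (-x)) ^ k) := by
    apply continuous_finset_sum
    intro k _
    exact continuous_const.mul ((continuous_id.mul (Real.continuous_exp.comp continuous_neg)).pow k)
  have htend : Tendsto (fun x : ℝ => ∑ k ∈ range N, aa k * (x * Real.exp (-x)) ^ k)
      (nhdsWithin 1 (Set.Iio 1)) (nhds (∑ k ∈ range N, aa k * Real.exp (-1) ^ k)) := by
    have h1 := (hcont.tendsto 1).mono_left (nhdsWithin_le_nhds (s := Set.Iio 1))
    simpa using h1
  apply le_of_tendsto htend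
  filter_upwards [Ioo_mem_nhdsLT_of_mem (Set.mem_Ioc.mpr ⟨zero_lt_one, le_rfl⟩)] with y hy
  calc ∑ k ∈ range N, aa k * (y * Real.exp (-y)) ^ k
      ≤ ∑' k : ℕ, aa k * (y * Real.exp (-y)) ^ k := by
        apply Summable.sum_le_tsum (range N)
          (fun k _ => mul_nonneg (aa_nonneg k) (pow_nonneg (mul_nonneg hy.1.le (Real.exp_pos _).le) k))
          (summable_phi hy.1.le hy.2)
    _ = y := key_mid hy
    _ ≤ 1 := hy.2.le

lemma summable_one : Summable (fun k => aa k * Real.exp (-1) ^ k) :=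
  summable_of_sum_range_le
    (fun k => mul_nonneg (aa_nonneg k) (pow_nonneg (Real.exp_pos _).le k)) sum_range_le_one

lemma key_one : ∑' k : ℕ, aa k * Real.exp (-1) ^ k = 1 := by
  have hle : ∑' k : ℕ, aa k * Real.exp (-1) ^ k ≤ 1 :=
    Summable.tsum_le_of_sum_range_le summable_one sum_range_le_one
  have hge : ∀ y : ℝ, y ∈ Set.Ioo (0:ℝ) 1 → y ≤ ∑' k : ℕ, aa k * Real.exp (-1) ^ k := by
    intro y hy
    rw [← key_mid hy]
    apply Summable.tsum_le_tsum _ (summable_phi hy.1.le hy.2) summable_one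
    intro k
    have hb : y * Real.exp (-y) ≤ Real.exp (-1) := (phi_lt hy.1.le hy.2).le
    have hnn : 0 ≤ y * Real.exp (-y) := mul_nonneg hy.1.le (Real.exp_pos _).le
    have := pow_le_pow_left₀ hnn hb k
    nlinarith [aa_nonneg k, pow_nonneg hnn k]
  set S := ∑' k : ℕ, aa k * Real.exp (-1) ^ k with hS
  by_contra hne
  have hlt : S < 1 := lt_of_le_of_ne hle hne
  set y := max (1/2 : ℝ) ((S+1)/2) with hy
  have hy1 : y < 1 := max_lt (by norm_num) (by linarith)
  have hy0 : (0:ℝ) < y := lt_of_lt_of_le (by norm_num) (le_max_left _ _)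
  have hyS : y ≤ S := hge y ⟨hy0, hy1⟩
  have : (S+1)/2 ≤ y := le_max_right _ _
  linarith

lemma key {x : ℝ} (hx0 : 0 < x) (hx1 : x ≤ 1) :
    Summable (fun k => aa k * (x * Real.exp (-x)) ^ k) ∧
      ∑' k : ℕ, aa k * (x * Real.exp (-x)) ^ k = x := by
  rcases lt_or_eq_of_le hx1 with h | h
  · exact ⟨summable_phi hx0.le h, key_mid ⟨hx0, h⟩⟩
  · subst h
    rw [one_mul]
    exact ⟨summable_one, key_one⟩


/-- `f(α) = Σ_{k≥1} (k^{k-1}/k!) α^{k-1} e^{-αk}` (the sum index below is shifted by one). -/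
noncomputable def fAlpha (α : ℝ) : ℝ :=
  ∑' k : ℕ, ((k + 1 : ℝ) ^ k / Nat.factorial (k + 1)) * α ^ k * Real.exp (-α * (k + 1))



lemma aa_succ (k : ℕ) : aa (k + 1) = (k + 1 : ℝ) ^ k / Nat.factorial (k + 1) := by
  unfold aa
  rw [if_neg (Nat.succ_ne_zero k)]
  push_cast
  norm_num

lemma key_shift {x : ℝ} (hx0 : 0 < x) (hx1 : x ≤ 1) :
    ∑' k : ℕ, ((k + 1 : ℝ) ^ k / Nat.factorial (k + 1)) * (x * Real.exp (-x)) ^ (k + 1) = x := by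
  obtain ⟨hsum, htsum⟩ := key hx0 hx1
  have h0 := Summable.tsum_eq_zero_add hsum
  rw [htsum] at h0
  have haa0 : aa 0 * (x * Real.exp (-x)) ^ 0 = 0 := by simp [aa]
  rw [haa0, zero_add] at h0
  calc ∑' k : ℕ, ((k + 1 : ℝ) ^ k / Nat.factorial (k + 1)) * (x * Real.exp (-x)) ^ (k + 1)
      = ∑' k : ℕ, aa (k + 1) * (x * Real.exp (-x)) ^ (k + 1) :=
        tsum_congr fun k => by rw [aa_succ]
    _ = x := h0.symm

lemma fAlpha_eq {α : ℝ} (hα : 0 < α) :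
    fAlpha α = α⁻¹ * ∑' k : ℕ, aa (k + 1) * (α * Real.exp (-α)) ^ (k + 1) := by
  rw [fAlpha, ← tsum_mul_left]
  refine tsum_congr fun k => ?_
  rw [aa_succ, mul_pow, ← Real.exp_nat_mul]
  have hexp : ((k:ℝ) + 1) * (-α) = -α * ((k:ℝ) + 1) := by ring
  push_cast
  rw [hexp]
  have hpow : α ^ (k + 1) = α * α ^ k := by rw [pow_succ]; ring
  rw [hpow]
  field_simp

theorem stmt16 :
    (∀ α : ℝ, 0 < α → α ≤ 1 → fAlpha α = 1) ∧
    (∀ α αbar : ℝ, 1 < α → 0 < αbar → αbar < 1 →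
      αbar * Real.exp (-αbar) = α * Real.exp (-α) → fAlpha α = αbar / α) ∧
    (∀ x : ℝ, 0 < x → x ≤ 1 →
      ∑' k : ℕ, ((k + 1 : ℝ) ^ k / Nat.factorial (k + 1)) *
        (x * Real.exp (-x)) ^ (k + 1) = x) := by
  refine ⟨?_, ?_, fun x hx0 hx1 => key_shift hx0 hx1⟩
  · intro α hα0 hα1
    rw [fAlpha_eq hα0]
    have heq : ∑' k : ℕ, aa (k + 1) * (α * Real.exp (-α)) ^ (k + 1) = α :=
      (tsum_congr fun k => by rw [aa_succ]).trans (key_shift hα0 hα1)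
    rw [heq, inv_mul_cancel₀ (ne_of_gt hα0)]
  · intro α αbar hα1 hb0 hb1 hphi
    rw [fAlpha_eq (by linarith)]
    have heq : ∑' k : ℕ, aa (k + 1) * (α * Real.exp (-α)) ^ (k + 1) = αbar := by
      rw [← hphi]
      exact (tsum_congr fun k => by rw [aa_succ]).trans (key_shift hb0 hb1.le)
    rw [heq]
    field_simp
end

section
/- For every real x with 0 < x < 1, Σ_{k=1}^∞ ((k−1)·k^{k-2}/k!) · (x e^{-x})^k = x²/2. -/
open Filter Finset fwdDiff
open scoped NNReal ENNReal

noncomputable def cc (k : ℕ) : ℝ := (k : ℝ) * (k + 1 : ℝ) ^ (k - 1) / Nat.factorial (k + 1)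


lemma fwdDiff_pow_eq_zero : ∀ (j N : ℕ), j < N → (fwdDiff (1:ℝ))^[N] (fun y : ℝ ↦ y ^ j) = 0 := by
  intro j
  induction j using Nat.strong_induction_on with
  | _ j ih =>
    intro N hN
    obtain ⟨N, rfl⟩ : ∃ M, N = M + 1 := ⟨N - 1, (Nat.succ_pred_eq_of_pos (Nat.pos_of_ne_zero (by omega))).symm⟩
    rw [Function.iterate_succ_apply]
    have h1 : Δ_[(1:ℝ)] (fun y : ℝ ↦ y ^ j) = ∑ i ∈ range j, (j.choose i : ℝ) • (fun y : ℝ ↦ y ^ i) := by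
      ext y
      simp only [fwdDiff, Finset.sum_apply, Pi.smul_apply, smul_eq_mul]
      rw [add_pow, Finset.sum_range_succ]
      simp [mul_comm]
    rw [h1, fwdDiff_iter_finset_sum]
    have h2 : ∀ i ∈ range j, (fwdDiff (1:ℝ))^[N] ((j.choose i : ℝ) • (fun y : ℝ ↦ y ^ i)) = 0 := by
      intro i hi
      have hij := mem_range.mp hi
      rw [fwdDiff_iter_const_smul, ih i hij N (by omega : i < N)]
      simp
    rw [Finset.sum_congr rfl h2]
    simp

lemma alt_sum_pow_eq_zero {j N : ℕ} (h : j < N) :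
    ∑ m ∈ range (N + 1), (-1 : ℝ) ^ (N - m) * (N.choose m) * (m : ℝ) ^ j = 0 := by
  have H := fwdDiff_iter_eq_sum_shift (1 : ℝ) (fun y : ℝ ↦ y ^ j) N 0
  rw [fwdDiff_pow_eq_zero j N h] at H
  simp only [Pi.zero_apply, zero_add, zsmul_eq_mul, nsmul_eq_mul, mul_one] at H
  push_cast at H
  exact H.symm


lemma cc_zero : cc 0 = 0 := by simp [cc]

lemma cc_nonneg (k : ℕ) : 0 ≤ cc k := by
  unfold cc; positivity

lemma pow_helper (k n : ℕ) (hk : k ≤ n) (hn : 1 ≤ n) :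
    (k : ℝ) * (k + 1 : ℝ) ^ (k - 1) * (k + 1 : ℝ) ^ (n - k) = (k + 1 : ℝ) ^ n - (k + 1 : ℝ) ^ (n - 1) := by
  rcases Nat.eq_zero_or_pos k with rfl | hkpos
  · simp
  · have h1 : (k : ℝ) * (k+1:ℝ)^(k-1) * (k+1:ℝ)^(n-k) = (k:ℝ) * (k+1:ℝ)^(n-1) := by
      rw [mul_assoc, ← pow_add]
      congr 2
      omega
    rw [h1]
    have h2 : (k + 1 : ℝ) ^ n = (k+1:ℝ) * (k+1:ℝ)^(n-1) := by
      rw [← pow_succ']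
      congr 1
      omega
    rw [h2]
    ring


lemma term_eq (n k : ℕ) (hk : k ≤ n) (hn : 2 ≤ n) :
    cc k * (-(k + 1 : ℝ)) ^ (n - k) / Nat.factorial (n - k) =
      (-1 : ℝ) ^ ((n + 1) - (k + 1)) * ((n + 1).choose (k + 1)) *
        (((k : ℝ) + 1) ^ n - ((k : ℝ) + 1) ^ (n - 1)) / Nat.factorial (n + 1) := by
  have hch : (((n+1).choose (k+1) : ℝ)) = (Nat.factorial (n+1) : ℝ) /
      ((Nat.factorial (k+1) : ℝ) * (Nat.factorial ((n+1)-(k+1)) : ℝ)) := by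
    rw [Nat.cast_choose ℝ (by omega : k+1 ≤ n+1)]
  have hnk : (n + 1) - (k + 1) = n - k := by omega
  rw [hch, hnk]
  have hfac1 : (0:ℝ) < Nat.factorial (k+1) := by positivity
  have hfac2 : (0:ℝ) < Nat.factorial (n-k) := by positivity
  have hfac3 : (0:ℝ) < Nat.factorial (n+1) := by positivity
  have hneg : (-(k + 1 : ℝ)) ^ (n - k) = (-1:ℝ)^(n-k) * (k+1:ℝ)^(n-k) := by
    rw [neg_pow]
  unfold cc
  rw [hneg]
  have hph := pow_helper k n hk (by omega)
  field_simp
  exact hph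

lemma S_eq (n : ℕ) :
    ∑ p ∈ antidiagonal n, cc p.1 * (-(p.1 + 1 : ℝ)) ^ p.2 / Nat.factorial p.2
      = if n = 1 then (1/2 : ℝ) else 0 := by
  rw [Finset.Nat.sum_antidiagonal_eq_sum_range_succ_mk]
  match n with
  | 0 => simp [cc_zero]
  | 1 =>
    rw [Finset.sum_range_succ, Finset.sum_range_succ, Finset.sum_range_zero]
    norm_num [cc_zero, cc]
    try norm_num [Nat.factorial]
  | (m+2) =>
    rw [if_neg (by omega)]
    set n := m + 2 with hn
    have key : ∑ mm ∈ range (n+2), (-1:ℝ)^((n+1)-mm) * (((n+1).choose mm) : ℝ) *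
        ((mm:ℝ)^n - (mm:ℝ)^(n-1)) / Nat.factorial (n+1) = 0 := by
      have e1 : ∑ mm ∈ range (n+2), (-1:ℝ)^((n+1)-mm) * (((n+1).choose mm):ℝ) *
          ((mm:ℝ)^n - (mm:ℝ)^(n-1)) / Nat.factorial (n+1)
          = ((∑ mm ∈ range (n+2), (-1:ℝ)^((n+1)-mm) * ((n+1).choose mm) * (mm:ℝ)^n)
            - (∑ mm ∈ range (n+2), (-1:ℝ)^((n+1)-mm) * ((n+1).choose mm) * (mm:ℝ)^(n-1)))
              / Nat.factorial (n+1) := by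
        rw [← Finset.sum_sub_distrib, Finset.sum_div]
        apply Finset.sum_congr rfl; intros; ring
      rw [e1, alt_sum_pow_eq_zero (show n < n+1 by omega),
        alt_sum_pow_eq_zero (show n-1 < n+1 by omega)]
      simp
    rw [Finset.sum_range_succ' _ (n+1)] at key
    have h0 : (-1:ℝ)^((n+1)-0) * (((n+1).choose 0) : ℝ) *
        (((0:ℕ):ℝ)^n - ((0:ℕ):ℝ)^(n-1)) / Nat.factorial (n+1) = 0 := by
      rw [hn]
      norm_num
    rw [h0, add_zero] at key
    rw [← key]
    apply Finset.sum_congr rfl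
    intro k hk
    have hkn : k ≤ n := by have := mem_range.mp hk; omega
    rw [term_eq n k hkn (by omega)]
    push_cast
    ring



lemma cc_le (k : ℕ) : cc k ≤ Real.exp 1 ^ (k + 1) := by
  have hb : (1:ℝ) ≤ (k:ℝ) + 1 := by
    have := Nat.cast_nonneg (α := ℝ) k; linarith
  have h1 : (k:ℝ) * ((k:ℝ)+1) ^ (k-1) ≤ ((k:ℝ)+1) ^ (k+1) := by
    rw [pow_succ']
    apply mul_le_mul (by linarith) (pow_le_pow_right₀ hb (by omega)) (by positivity) (by linarith)
  have h2 : ((k:ℝ)+1) ^ (k+1) / Nat.factorial (k+1) ≤ Real.exp ((k:ℝ)+1) := by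
    have := Real.pow_div_factorial_le_exp (x := (k:ℝ)+1) (by positivity) (k+1)
    simpa using this
  calc cc k = (k:ℝ) * ((k:ℝ) + 1) ^ (k - 1) / Nat.factorial (k+1) := rfl
    _ ≤ ((k:ℝ)+1) ^ (k+1) / Nat.factorial (k+1) := by gcongr
    _ ≤ Real.exp ((k:ℝ)+1) := h2
    _ = Real.exp 1 ^ (k+1) := by
        rw [← Real.exp_nat_mul]
        push_cast
        ring_nf

lemma q_lt (x : ℝ) (hx0 : 0 < x) (hx1 : x < 1/8) : Real.exp 1 * (x * Real.exp x) < 1 := by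
  have h1 : Real.exp x ≤ Real.exp 1 := Real.exp_le_exp.mpr (by linarith)
  have h2 : Real.exp 1 < 2.7182818286 := Real.exp_one_lt_d9
  have h3 : 0 < Real.exp 1 := Real.exp_pos 1
  have h4 : 0 < Real.exp x := Real.exp_pos x
  calc Real.exp 1 * (x * Real.exp x) ≤ Real.exp 1 * (x * Real.exp 1) := by gcongr
    _ = Real.exp 1 * Real.exp 1 * x := by ring
    _ < 2.7182818286 * 2.7182818286 * (1/8) := by nlinarith [mul_pos h3 h3, mul_pos (mul_pos h3 h3) hx0]
    _ < 1 := by norm_num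

lemma exp_tsum (y : ℝ) : ∑' j : ℕ, y ^ j / Nat.factorial j = Real.exp y := by
  rw [Real.exp_eq_exp_ℝ, NormedSpace.exp_eq_tsum_div]

noncomputable def hfun (x : ℝ) (p : ℕ × ℕ) : ℝ :=
  cc p.1 * x ^ (p.1+1) * ((-((p.1:ℝ)+1) * x) ^ p.2 / Nat.factorial p.2)

noncomputable def Hfun (x : ℝ) (p : ℕ × ℕ) : ℝ :=
  cc p.1 * x ^ (p.1+1) * ((((p.1:ℝ)+1) * x) ^ p.2 / Nat.factorial p.2)

lemma small_x (x : ℝ) (hx0 : 0 < x) (hx1 : x < 1/8) :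
    ∑' k : ℕ, cc k * (x * Real.exp (-x)) ^ (k + 1) = x ^ 2 / 2 := by
  have hq : Real.exp 1 * (x * Real.exp x) < 1 := q_lt x hx0 hx1
  have hq0 : 0 ≤ Real.exp 1 * (x * Real.exp x) := by positivity
  have hrow : ∀ k : ℕ, ∑' j : ℕ, Hfun x (k, j) = cc k * (x * Real.exp x) ^ (k+1) := by
    intro k
    simp only [Hfun]
    rw [tsum_mul_left, exp_tsum (((k:ℝ)+1) * x)]
    have he : Real.exp (((k:ℝ)+1) * x) = Real.exp x ^ (k+1) := by
      rw [← Real.exp_nat_mul]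
      push_cast
      ring_nf
    rw [he, mul_pow]
    ring
  have hrowsum : Summable (fun k : ℕ ↦ cc k * (x * Real.exp x) ^ (k+1)) := by
    have hgeo : Summable (fun k : ℕ ↦ (Real.exp 1 * (x * Real.exp x)) ^ (k+1)) :=
      Summable.congr ((summable_geometric_of_lt_one hq0 hq).mul_left _)
        (fun k ↦ (pow_succ' _ k).symm)
    refine Summable.of_nonneg_of_le
      (fun k ↦ mul_nonneg (cc_nonneg k) (by positivity)) (fun k ↦ ?_) hgeo
    conv_rhs => rw [mul_pow]
    exact mul_le_mul_of_nonneg_right (cc_le k) (by positivity)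
  have hHpos : 0 ≤ Hfun x := by
    intro p
    exact mul_nonneg (mul_nonneg (cc_nonneg p.1) (by positivity))
      (div_nonneg (pow_nonneg (by positivity) _) (by positivity))
  have hHsum : Summable (Hfun x) := by
    refine (summable_prod_of_nonneg hHpos).mpr ⟨fun k ↦ ?_, ?_⟩
    · have := (Real.summable_pow_div_factorial (((k:ℝ)+1) * x)).mul_left (cc k * x ^ (k+1))
      apply this.congr
      intro j
      simp only [Hfun]
      try ring
    · exact hrowsum.congr fun k ↦ (hrow k).symm
  have habs : ∀ p : ℕ × ℕ, ‖hfun x p‖ ≤ Hfun x p := by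
    intro p
    simp only [hfun, Hfun, Real.norm_eq_abs, abs_mul, abs_div, abs_pow, abs_neg, Nat.abs_cast]
    rw [abs_of_nonneg (cc_nonneg p.1), abs_of_nonneg hx0.le,
      abs_of_nonneg (by positivity : (0:ℝ) ≤ (p.1:ℝ)+1)]
  have hhsum : Summable (hfun x) := Summable.of_norm_bounded hHsum habs
  have e1 : ∑' p : ℕ × ℕ, hfun x p = ∑' k : ℕ, cc k * (x * Real.exp (-x)) ^ (k+1) := by
    rw [Summable.tsum_prod' hhsum (fun k ↦ by
      simpa only [hfun] using ((Real.summable_pow_div_factorial (-((k:ℝ)+1) * x)).mul_left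
        (cc k * x ^ (k+1))))]
    apply tsum_congr
    intro k
    simp only [hfun]
    rw [tsum_mul_left, exp_tsum (-((k:ℝ)+1) * x)]
    have he : Real.exp (-((k:ℝ)+1) * x) = Real.exp (-x) ^ (k+1) := by
      rw [← Real.exp_nat_mul]
      push_cast
      ring_nf
    rw [he, mul_pow]
    ring
  have e2 : ∑' p : ℕ × ℕ, hfun x p = x ^ 2 / 2 := by
    have hsig : Summable (fun q : (Σ n : ℕ, antidiagonal n) ↦ hfun x (q.2 : ℕ × ℕ)) :=
      Finset.HasAntidiagonal.sigmaAntidiagonalEquivProd.summable_iff.mpr hhsum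
    have step1 : ∑' p : ℕ × ℕ, hfun x p
        = ∑' q : (Σ n : ℕ, antidiagonal n), hfun x (Finset.HasAntidiagonal.sigmaAntidiagonalEquivProd q) :=
      (Equiv.tsum_eq _ _).symm
    have step2 : ∑' q : (Σ n : ℕ, antidiagonal n), hfun x (Finset.HasAntidiagonal.sigmaAntidiagonalEquivProd q)
        = ∑' (n : ℕ), ∑' (p : antidiagonal n), hfun x (p : ℕ × ℕ) :=
      Summable.tsum_sigma' (fun n ↦ (hasSum_fintype _).summable) hsig
    have step3 : ∀ n : ℕ, ∑' (p : antidiagonal n), hfun x (p : ℕ × ℕ)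
        = ∑ p ∈ antidiagonal n, hfun x p := fun n ↦ Finset.tsum_subtype _ _
    have step4 : ∀ n : ℕ, ∑ p ∈ antidiagonal n, hfun x p
        = (if n = 1 then (1/2:ℝ) else 0) * x ^ (n+1) := by
      intro n
      rw [← S_eq n, Finset.sum_mul]
      apply Finset.sum_congr rfl
      intro p hp
      have hpn : p.1 + p.2 = n := Finset.HasAntidiagonal.mem_antidiagonal.mp hp
      have hx' : x ^ (p.1+1) * x ^ p.2 = x ^ (n+1) := by
        rw [← pow_add]; congr 1; omega
      simp only [hfun]
      rw [mul_pow, ← hx']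
      push_cast
      ring
    rw [step1, step2, tsum_congr step3, tsum_congr step4]
    have hite : ∀ n : ℕ, (if n = 1 then (1/2:ℝ) else 0) * x ^ (n+1)
        = if n = 1 then x^2/2 else 0 := by
      intro n
      split_ifs with hn
      · subst hn; ring
      · ring
    rw [tsum_congr hite, tsum_ite_eq]
  rw [← e1, e2]


noncomputable def ccoef : ℕ → ℝ :=
  fun n ↦ if n = 0 then 0 else ((n:ℝ) - 1) * (n:ℝ) ^ (n - 2) / Nat.factorial n

lemma ccoef_succ (k : ℕ) : ccoef (k+1) = cc k := by
  simp only [ccoef, if_neg (Nat.succ_ne_zero k), cc]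
  have he : (k+1) - 2 = k - 1 := by omega
  rw [he]
  push_cast
  ring

lemma ccoef_zero : ccoef 0 = 0 := by simp [ccoef]

lemma radius_ge :
    ((Real.toNNReal (Real.exp 1)⁻¹ : ℝ≥0) : ℝ≥0∞)
      ≤ (FormalMultilinearSeries.ofScalars ℝ ccoef).radius := by
  apply FormalMultilinearSeries.le_radius_of_bound _ 1
  intro n
  rw [FormalMultilinearSeries.ofScalars_norm]
  have hr : ((Real.toNNReal (Real.exp 1)⁻¹ : ℝ≥0) : ℝ) = (Real.exp 1)⁻¹ :=
    Real.coe_toNNReal _ (by positivity)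
  rw [hr]
  cases n with
  | zero => simp [ccoef]
  | succ k =>
    have h1 : ‖ccoef (k+1)‖ = cc k := by
      rw [ccoef_succ, Real.norm_eq_abs, abs_of_nonneg (cc_nonneg k)]
    rw [h1]
    calc cc k * ((Real.exp 1)⁻¹) ^ (k+1)
        ≤ Real.exp 1 ^ (k+1) * ((Real.exp 1)⁻¹) ^ (k+1) :=
          mul_le_mul_of_nonneg_right (cc_le k) (by positivity)
      _ = 1 := by
          rw [← mul_pow, mul_inv_cancel₀ (Real.exp_ne_zero 1), one_pow]

lemma radius_pos : 0 < (FormalMultilinearSeries.ofScalars ℝ ccoef).radius :=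
  lt_of_lt_of_le (by
    rw [ENNReal.coe_pos, Real.toNNReal_pos]
    positivity) radius_ge

lemma t_lt (x : ℝ) (hx0 : 0 < x) (hx1 : x < 1) : x * Real.exp (-x) < (Real.exp 1)⁻¹ := by
  have h := Real.add_one_lt_exp (x := x - 1) (sub_ne_zero.mpr (ne_of_lt hx1))
  rw [sub_add_cancel, Real.exp_sub] at h
  have he1 : 0 < Real.exp 1 := Real.exp_pos 1
  have hex : 0 < Real.exp x := Real.exp_pos x
  have h' : x * Real.exp 1 < Real.exp x := (lt_div_iff₀ he1).mp h
  rw [Real.exp_neg, ← div_eq_mul_inv, div_lt_iff₀ hex]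
  have hre : (Real.exp 1)⁻¹ * Real.exp x = Real.exp x / Real.exp 1 := by
    rw [div_eq_mul_inv]; ring
  rw [hre]
  exact (lt_div_iff₀ he1).mpr h'

lemma sum_repr (y : ℝ) (hy : |y| < (Real.exp 1)⁻¹) :
    (FormalMultilinearSeries.ofScalars ℝ ccoef).sum y = ∑' k : ℕ, cc k * y ^ (k+1) := by
  have hmem : y ∈ Metric.eball (0:ℝ) (FormalMultilinearSeries.ofScalars ℝ ccoef).radius := by
    rw [mem_emetric_ball_zero_iff]
    refine lt_of_lt_of_le ?_ radius_ge
    rw [enorm_lt_coe, Real.lt_toNNReal_iff_coe_lt, coe_nnnorm, Real.norm_eq_abs]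
    exact hy
  have hs := ((FormalMultilinearSeries.ofScalars ℝ ccoef).hasFPowerSeriesOnBall
    radius_pos).hasSum hmem
  have hco : ∀ n, (FormalMultilinearSeries.ofScalars ℝ ccoef).coeff n = ccoef n := by
    intro n
    simp [FormalMultilinearSeries.coeff, FormalMultilinearSeries.ofScalars, List.prod_ofFn]
  have hs' : HasSum (fun n : ℕ ↦ ccoef n * y ^ n)
      ((FormalMultilinearSeries.ofScalars ℝ ccoef).sum (0 + y)) := by
    simpa [FormalMultilinearSeries.ofScalars_apply_eq, smul_eq_mul, hco, mul_comm] using hs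
  rw [zero_add] at hs'
  rw [← hs'.tsum_eq, Summable.tsum_eq_zero_add hs'.summable, ccoef_zero, zero_mul, zero_add]
  exact tsum_congr fun k ↦ by rw [ccoef_succ]

theorem stmt18 (x : ℝ) (hx0 : 0 < x) (hx1 : x < 1) :
    ∑' k : ℕ, ((k : ℝ) * (k + 1 : ℝ) ^ (k - 1) / Nat.factorial (k + 1)) *
      (x * Real.exp (-x)) ^ (k + 1) = x ^ 2 / 2 := by
  have habs : ∀ y : ℝ, 0 < y → y < 1 → |y * Real.exp (-y)| < (Real.exp 1)⁻¹ := by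
    intro y hy0 hy1
    rw [abs_of_nonneg (by positivity)]
    exact t_lt y hy0 hy1
  have hFeq : ∀ y ∈ Set.Ioo (0:ℝ) 1,
      (FormalMultilinearSeries.ofScalars ℝ ccoef).sum (y * Real.exp (-y))
        = ∑' k : ℕ, cc k * (y * Real.exp (-y)) ^ (k+1) :=
    fun y hy ↦ sum_repr _ (habs y hy.1 hy.2)
  have hFanalytic : AnalyticOnNhd ℝ
      (fun y : ℝ ↦ (FormalMultilinearSeries.ofScalars ℝ ccoef).sum (y * Real.exp (-y)))
      (Set.Ioo 0 1) := by
    intro y hy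
    have h1 : AnalyticAt ℝ (FormalMultilinearSeries.ofScalars ℝ ccoef).sum
        (y * Real.exp (-y)) := by
      apply ((FormalMultilinearSeries.ofScalars ℝ ccoef).hasFPowerSeriesOnBall
        radius_pos).analyticAt_of_mem
      rw [mem_emetric_ball_zero_iff]
      refine lt_of_lt_of_le ?_ radius_ge
      rw [enorm_lt_coe, Real.lt_toNNReal_iff_coe_lt, coe_nnnorm, Real.norm_eq_abs]
      exact habs y hy.1 hy.2
    have h2 : AnalyticAt ℝ (fun z : ℝ ↦ z * Real.exp (-z)) y := by
      apply AnalyticAt.mul analyticAt_id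
      exact analyticAt_rexp.comp analyticAt_id.neg
    exact AnalyticAt.comp (g := (FormalMultilinearSeries.ofScalars ℝ ccoef).sum)
      (f := fun z : ℝ ↦ z * Real.exp (-z)) h1 h2
  have hGanalytic : AnalyticOnNhd ℝ (fun y : ℝ ↦ y^2/2) (Set.Ioo 0 1) :=
    fun y _ ↦ ((analyticAt_id.pow 2).div analyticAt_const (by norm_num))
  have hmem16 : Set.Ioo (0:ℝ) (1/8) ∈ nhds (1/16 : ℝ) :=
    isOpen_Ioo.mem_nhds (by norm_num)
  have heq : (fun y : ℝ ↦ (FormalMultilinearSeries.ofScalars ℝ ccoef).sum (y * Real.exp (-y)))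
      =ᶠ[nhds (1/16 : ℝ)] (fun y : ℝ ↦ y^2/2) := by
    filter_upwards [hmem16] with y hy
    rw [hFeq y ⟨hy.1, by linarith [hy.2]⟩, small_x y hy.1 hy.2]
  have hEq := hFanalytic.eqOn_of_preconnected_of_eventuallyEq hGanalytic isPreconnected_Ioo
    (show (1/16:ℝ) ∈ Set.Ioo (0:ℝ) 1 by norm_num) heq (show x ∈ Set.Ioo (0:ℝ) 1 from ⟨hx0, hx1⟩)
  have final : ∑' k : ℕ, cc k * (x * Real.exp (-x)) ^ (k+1) = x ^ 2 / 2 := by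
    rw [← hFeq x ⟨hx0, hx1⟩]
    exact hEq
  exact final
end
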